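/- arXiv:1702.04086 — 5 statements merged into one kernel-verified Lean document; each statement's English description precedes it below -/
import Mathlib

section
/- The only self-reciprocal primitive polynomials over GF(2) are x+1 and x²+x+1. -/
open Polynomial

lemma zmod2_eq_one {x : ZMod 2} (h : x ≠ 0) : x = 1 := by revert x; decide

lemma expand_two (f : Polynomial (ZMod 2)) : expand (ZMod 2) 2 f = f ^ 2 := by
  have h := map_frobenius_expand 2 f
  rwa [ZMod.frobenius_zmod, Polynomial.map_id] at h

lemma deg_ge_three_aux (f : Polynomial (ZMod 2)) (hirr : Irreducible f)
    (hdvd : f ∣ (X ^ (2 ^ f.natDegree - 1) - 1))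
    (hmin : ∀ k : ℕ, 0 < k → k < 2 ^ f.natDegree - 1 → ¬ f ∣ (X ^ k - 1))
    (hsr : f.reverse = f) (hm : 3 ≤ f.natDegree) : False := by
  haveI := Fact.mk hirr
  set m := f.natDegree with hmdef
  set N := 2 ^ m - 1 with hNdef
  have h8 : (8:ℕ) ≤ 2 ^ m := by
    calc (8:ℕ) = 2^3 := rfl
      _ ≤ 2^m := Nat.pow_le_pow_right (by norm_num) hm
  have hNpos : 0 < N := by omega
  set K := AdjoinRoot f with hK
  set a : K := AdjoinRoot.root f with ha
  -- a^N = 1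
  have haN : a ^ N = 1 := by
    have h0 : AdjoinRoot.mk f (X ^ N - 1) = 0 := AdjoinRoot.mk_eq_zero.mpr hdvd
    have h1 : a ^ N - 1 = 0 := by
      simpa [map_sub, map_pow, AdjoinRoot.mk_X] using h0
    exact sub_eq_zero.mp h1
  have ha0 : a ≠ 0 := by
    intro h
    rw [h, zero_pow hNpos.ne'] at haN
    exact zero_ne_one haN
  -- minimality
  have hspec : ∀ k : ℕ, 0 < k → k < N → a ^ k ≠ 1 := by
    intro k hk hkN hak
    refine hmin k hk hkN (AdjoinRoot.mk_eq_zero.mp ?_)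
    have : a ^ k - 1 = 0 := sub_eq_zero.mpr hak
    simpa [map_sub, map_pow, AdjoinRoot.mk_X] using this
  -- order of a is exactly N
  have hord : orderOf a = N := by
    have hfin : IsOfFinOrder a := isOfFinOrder_iff_pow_eq_one.mpr ⟨N, hNpos, haN⟩
    have hdvd' : orderOf a ∣ N := orderOf_dvd_of_pow_eq_one haN
    have hle : orderOf a ≤ N := Nat.le_of_dvd hNpos hdvd'
    rcases lt_or_eq_of_le hle with h | h
    · exact absurd (pow_orderOf_eq_one a) (hspec _ hfin.orderOf_pos h)
    · exact h
  have hdvdN : ∀ k : ℕ, a ^ k = 1 → N ∣ k := fun k hk => hord ▸ orderOf_dvd_of_pow_eq_one hk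
  -- a is a root of f
  have hroot : aeval a f = 0 := by
    rw [aeval_def, AdjoinRoot.algebraMap_eq]
    exact AdjoinRoot.eval₂_root f
  -- a⁻¹ is a root of f
  have hrootinv : aeval a⁻¹ f = 0 := by
    letI : Invertible a := invertibleOfNonzero ha0
    have h := (eval₂_reverse_eq_zero_iff (algebraMap (ZMod 2) K) a f).mpr hroot
    rw [hsr] at h
    rwa [invOf_eq_inv a, ← aeval_def] at h
  -- Frobenius orbit of roots
  have hstep : ∀ b : K, aeval b f = 0 → aeval (b ^ 2) f = 0 := by
    intro b hb
    have := expand_aeval 2 f b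
    rw [expand_two, map_pow, hb] at this
    simpa using this.symm
  have hfrob : ∀ i : ℕ, aeval (a ^ 2 ^ i) f = 0 := by
    intro i
    induction i with
    | zero => simpa using hroot
    | succ i ih =>
        have := hstep _ ih
        rwa [← pow_mul, ← pow_succ] at this
  -- the roots finset
  set g : K[X] := f.map (algebraMap (ZMod 2) K) with hg
  have hgne : g ≠ 0 := Polynomial.map_ne_zero hirr.ne_zero
  have hmemroots : ∀ b : K, aeval b f = 0 → b ∈ g.roots.toFinset := by
    intro b hb
    rw [Multiset.mem_toFinset, mem_roots hgne]
    rw [aeval_def, ← eval_map] at hb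
    exact hb
  have hcard : g.roots.toFinset.card ≤ m := by
    calc g.roots.toFinset.card ≤ Multiset.card g.roots := g.roots.toFinset_card_le
      _ ≤ g.natDegree := g.card_roots'
      _ = m := natDegree_map (algebraMap (ZMod 2) K)
  -- distinctness of a^(2^i)
  have key : ∀ i j : ℕ, i < j → j < m → a ^ 2 ^ i = a ^ 2 ^ j → False := by
    intro i j hij hjm heq
    have hle : 2 ^ i ≤ 2 ^ j := Nat.pow_le_pow_right (by norm_num) hij.le
    have hsplit : a ^ 2 ^ j = a ^ 2 ^ i * a ^ (2 ^ j - 2 ^ i) := by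
      rw [← pow_add]; congr 1; omega
    have hone : a ^ (2 ^ j - 2 ^ i) = 1 := by
      have h1 := heq.trans hsplit
      nth_rewrite 1 [show a ^ 2 ^ i = a ^ 2 ^ i * 1 by ring] at h1
      exact (mul_left_cancel₀ (pow_ne_zero _ ha0) h1).symm
    have hfact : 2 ^ j - 2 ^ i = 2 ^ i * (2 ^ (j - i) - 1) := by
      rw [Nat.mul_sub, mul_one, ← pow_add]
      congr 2; omega
    have hNdvd : N ∣ 2 ^ i * (2 ^ (j - i) - 1) := hfact ▸ hdvdN _ hone
    have hoddN : Odd N := by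
      have h2 : 2 ∣ 2 ^ m := dvd_pow_self 2 (by omega)
      rcases h2 with ⟨c, hc⟩
      exact ⟨c - 1, by omega⟩
    have hcop : Nat.Coprime N (2 ^ i) := (Nat.coprime_two_right.mpr hoddN).pow_right i
    have hNt : N ∣ 2 ^ (j - i) - 1 := (Nat.Coprime.dvd_mul_left hcop).mp hNdvd
    have hlt : 2 ^ (j - i) < 2 ^ m := Nat.pow_lt_pow_right (by norm_num) (by omega)
    have hpos : 0 < 2 ^ (j - i) - 1 := by
      have : 2 ^ 1 ≤ 2 ^ (j - i) := Nat.pow_le_pow_right (by norm_num) (by omega)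
      omega
    have := Nat.le_of_dvd hpos hNt
    omega
  have hinj : Set.InjOn (fun i => a ^ 2 ^ i) (Finset.range m) := by
    intro i hi j hj heq
    simp only [Finset.coe_range, Set.mem_Iio] at hi hj
    rcases lt_trichotomy i j with h | h | h
    · exact absurd heq (fun he => key i j h hj he)
    · exact h
    · exact absurd heq.symm (fun he => key j i h hi he)
  -- the finset of Frobenius conjugates has exactly m elements and fills all roots
  set S : Finset K := (Finset.range m).image (fun i => a ^ 2 ^ i) with hS
  have hScard : S.card = m := by
    rw [hS, Finset.card_image_of_injOn hinj, Finset.card_range]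
  have hSsub : S ⊆ g.roots.toFinset := by
    intro b hb
    rw [hS, Finset.mem_image] at hb
    obtain ⟨i, _, rfl⟩ := hb
    exact hmemroots _ (hfrob i)
  have hSeq : S = g.roots.toFinset :=
    Finset.eq_of_subset_of_card_le hSsub (le_of_le_of_eq hcard hScard.symm)
  have hainv : a⁻¹ ∈ S := hSeq ▸ hmemroots _ hrootinv
  rw [hS, Finset.mem_image] at hainv
  obtain ⟨j, hjm, hj⟩ := hainv
  rw [Finset.mem_range] at hjm
  -- a ^ (2^j + 1) = 1, so N ∣ 2^j + 1, contradiction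
  have hone : a ^ (2 ^ j + 1) = 1 := by
    rw [pow_add, pow_one, hj, inv_mul_cancel₀ ha0]
  have hNdvd2 : N ∣ 2 ^ j + 1 := hdvdN _ hone
  have hleN : N ≤ 2 ^ j + 1 := Nat.le_of_dvd (Nat.succ_pos _) hNdvd2
  have hj2 : 2 ^ j ≤ 2 ^ (m - 1) := Nat.pow_le_pow_right (by norm_num) (by omega)
  have hm2 : 2 ^ m = 2 * 2 ^ (m - 1) := by
    rw [← pow_succ']
    congr 1; omega
  have h4 : (4:ℕ) ≤ 2 ^ (m - 1) := by
    calc (4:ℕ) = 2 ^ 2 := rfl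
      _ ≤ 2 ^ (m - 1) := Nat.pow_le_pow_right (by norm_num) (by omega)
  have hleN' : 2 ^ m - 1 ≤ 2 ^ j + 1 := hleN
  omega

lemma monic_dvd_eq {p q : Polynomial (ZMod 2)} (hp : p.Monic) (hq : q.Monic)
    (h : p ∣ q) (hd : q.natDegree ≤ p.natDegree) : p = q := by
  obtain ⟨c, rfl⟩ := h
  have hc0 : c ≠ 0 := by rintro rfl; rw [mul_zero] at hq; exact hq.ne_zero rfl
  have hdm := natDegree_mul hp.ne_zero hc0
  have hcd : c.natDegree = 0 := by omega
  have hcm : c.Monic := zmod2_eq_one (leadingCoeff_ne_zero.mpr hc0)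
  have hc1 : c = 1 := (Monic.natDegree_eq_zero hcm).mp hcd
  rw [hc1, mul_one]

lemma eq_of_deg2 (f : Polynomial (ZMod 2)) (hm : f.Monic) (hd : f.natDegree = 2) :
    f = X ^ 2 + C (f.coeff 1) * X + C (f.coeff 0) := by
  have h2 : f.coeff 2 = 1 := by
    have := hm.leadingCoeff
    rwa [leadingCoeff, hd] at this
  ext n
  rcases n with _ | _ | _ | n
  · simp
  · simp
  · simp [h2, coeff_X_pow]
  · have : f.coeff (n + 3) = 0 := coeff_eq_zero_of_natDegree_lt (by omega)
    rw [this]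
    simp [coeff_X_pow, coeff_C]

lemma deg_two_aux (f : Polynomial (ZMod 2)) (hirr : Irreducible f) (hd : f.natDegree = 2) :
    f = X ^ 2 + X + 1 := by
  have hmonic : f.Monic := zmod2_eq_one (leadingCoeff_ne_zero.mpr hirr.ne_zero)
  have hnoroot : ∀ r : ZMod 2, f.eval r ≠ 0 := by
    intro r hr
    obtain ⟨c, hc⟩ := dvd_iff_isRoot.mpr hr
    rcases hirr.isUnit_or_isUnit hc with h | h
    · exact (Polynomial.not_isUnit_X_sub_C r) h
    · have hc0 : c ≠ 0 := fun h0 => by simp [h0] at hc; exact hirr.ne_zero hc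
      have := natDegree_mul (X_sub_C_ne_zero r) hc0
      rw [← hc, hd, natDegree_X_sub_C, natDegree_eq_zero_of_isUnit h] at this
      omega
  have hrep := eq_of_deg2 f hmonic hd
  have h0 : f.coeff 0 = 1 := by
    have := hnoroot 0
    rw [hrep] at this
    simpa using zmod2_eq_one (by simpa using this)
  have h1 : f.coeff 1 = 1 := by
    have := hnoroot 1
    rw [hrep, h0] at this
    simp at this
    have : f.coeff 1 ≠ 0 := by
      intro hh; rw [hh] at this; simp at this; exact this (by decide)
    exact zmod2_eq_one this
  rw [hrep, h0, h1, map_one, one_mul]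


def IsPrimitivePoly (f : Polynomial (ZMod 2)) : Prop :=
  Irreducible f ∧
    f ∣ (X ^ (2 ^ f.natDegree - 1) - 1) ∧
    ∀ k : ℕ, 0 < k → k < 2 ^ f.natDegree - 1 → ¬ f ∣ (X ^ k - 1)

/-- The only self-reciprocal primitive polynomials over `GF(2)` are `x + 1` and
`x² + x + 1`.  (A polynomial is self-reciprocal if it equals its reciprocal
`f̂(x) = x^{deg f} f(1/x)`, i.e. `f.reverse = f`.) -/
theorem selfReciprocal_primitive (f : Polynomial (ZMod 2))
    (hf : IsPrimitivePoly f) (hsr : f.reverse = f) :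
    f = X + 1 ∨ f = X ^ 2 + X + 1 := by
  obtain ⟨hirr, hdvd, hmin⟩ := hf
  have hmonic : f.Monic := zmod2_eq_one (leadingCoeff_ne_zero.mpr hirr.ne_zero)
  have hm1 : 1 ≤ f.natDegree := hirr.natDegree_pos
  rcases eq_or_lt_of_le hm1 with h1 | h1'
  · -- degree 1
    left
    rw [← h1] at hdvd
    norm_num at hdvd
    rw [CharTwo.sub_eq_add] at hdvd
    have hx1 : (X + 1 : Polynomial (ZMod 2)) = X + C 1 := by rw [map_one]
    rw [hx1] at hdvd ⊢
    refine monic_dvd_eq hmonic (monic_X_add_C 1) hdvd ?_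
    rw [natDegree_X_add_C, ← h1]
  · rcases eq_or_lt_of_le (Nat.succ_le_of_lt h1') with h2 | h2'
    · right
      exact deg_two_aux f hirr h2.symm
    · exact absurd (deg_ge_three_aux f hirr hdvd hmin hsr h2') not_false
end

section
/- Let n = 2^m − 1 with m ≥ 3, and let φ : ℤ/nℤ → GF(2) be an m-sequence (Golomb sequence). Then the autocorrelation is two-valued: Σ_{i=0}^{n−1} (−1)^{φ(i)+φ(i+a)} equals n when a ≡ 0 mod n, and equals −1 for every a not divisible by n. -/
open Polynomial


/-- `φ : ℤ/nℤ → GF(2)` (with `n = 2^m − 1`) is a binary m-sequence (Golomb sequence):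
it is nonzero and satisfies the order-`m` linear recursion
`φ(i+m) = Σ_{j<m} f_j φ(i+j)` whose characteristic polynomial `f` is primitive of
degree `m`. -/
def IsMSequence (m n : ℕ) [NeZero n] (φ : ZMod n → ZMod 2) : Prop :=
  φ ≠ 0 ∧ ∃ f : Polynomial (ZMod 2), IsPrimitivePoly f ∧ f.natDegree = m ∧
    ∀ i : ZMod n, φ (i + (m : ZMod n)) =
      ∑ j ∈ Finset.range m, f.coeff j * φ (i + (j : ZMod n))

lemma pow_mod_of_pow_eq_one {M : Type*} [Monoid M] {x : M} {n : ℕ} (h : x ^ n = 1) (k : ℕ) :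
    x ^ k = x ^ (k % n) := by
  conv_lhs => rw [← Nat.div_add_mod k n]
  rw [pow_add, pow_mul, h, one_pow, one_mul]

lemma rec_ext {n m : ℕ} [NeZero n] (f : Polynomial (ZMod 2)) (g h : ZMod n → ZMod 2)
    (hg : ∀ i : ZMod n, g (i + (m : ZMod n)) =
      ∑ j ∈ Finset.range m, f.coeff j * g (i + (j : ZMod n)))
    (hh : ∀ i : ZMod n, h (i + (m : ZMod n)) =
      ∑ j ∈ Finset.range m, f.coeff j * h (i + (j : ZMod n)))
    (h0 : ∀ j : ℕ, j < m → g (j : ZMod n) = h (j : ZMod n)) : g = h := by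
  have key : ∀ k : ℕ, g (k : ZMod n) = h (k : ZMod n) := by
    intro k
    induction k using Nat.strong_induction_on with
    | _ k ih =>
      rcases lt_or_ge k m with hk | hk
      · exact h0 k hk
      · have hkm : ((k - m : ℕ) : ZMod n) + (m : ZMod n) = (k : ZMod n) := by
          rw [← Nat.cast_add]; congr 1; omega
        have := hg ((k - m : ℕ) : ZMod n)
        have := hh ((k - m : ℕ) : ZMod n)
        rw [hkm] at *
        rw [‹g (k : ZMod n) = _›, ‹h (k : ZMod n) = _›]
        apply Finset.sum_congr rfl
        intro j hj
        rw [Finset.mem_range] at hj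
        have hcast : ((k - m : ℕ) : ZMod n) + (j : ZMod n) = ((k - m + j : ℕ) : ZMod n) := by
          push_cast; ring
        rw [hcast, ih (k - m + j) (by omega)]
  funext i
  have : ((i.val : ℕ) : ZMod n) = i := ZMod.natCast_rightInverse i
  rw [← this, key]

lemma balance (m n : ℕ) (hm : 1 ≤ m) (hn : n = 2 ^ m - 1) [NeZero n]
    (φ : ZMod n → ZMod 2) (hφ : IsMSequence m n φ) (a : ZMod n) (ha : a ≠ 0) :
    ∑ i : ZMod n, ((-1 : ℤ) ^ ((φ i + φ (i + a)).val)) = -1 := by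
  classical
  obtain ⟨hφ0, f, ⟨hirr, hdvd, hmin⟩, hdeg, hrec⟩ := hφ
  haveI : Fact (Irreducible f) := ⟨hirr⟩
  have hnm : n = 2 ^ f.natDegree - 1 := by rw [hdeg, ← hn]
  have hnpos : 0 < n := Nat.pos_of_ne_zero (NeZero.ne n)
  -- f is monic
  have hmon : f.Monic := by
    have h1 : f.leadingCoeff ≠ 0 := Polynomial.leadingCoeff_ne_zero.mpr hirr.ne_zero
    have : ∀ u : ZMod 2, u ≠ 0 → u = 1 := by decide
    exact this _ h1
  set K := AdjoinRoot f with hK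
  let b : Module.Basis (Fin f.natDegree) (ZMod 2) K := AdjoinRoot.powerBasisAux' hmon
  letI : Fintype K := Module.fintypeOfFintype b
  have hcard : Fintype.card K = 2 ^ m := by
    rw [Module.card_fintype b, ZMod.card, Fintype.card_fin, hdeg]
  set x : K := AdjoinRoot.root f with hx
  have hxn : x ^ n = 1 := by
    have : AdjoinRoot.mk f (X ^ n - 1) = 0 := AdjoinRoot.mk_eq_zero.mpr (hnm ▸ hdvd)
    rw [map_sub, map_pow, AdjoinRoot.mk_X, map_one, sub_eq_zero] at this
    exact this
  have hxk : ∀ k : ℕ, 0 < k → k < n → x ^ k ≠ 1 := by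
    intro k hk1 hk2 hxk1
    refine hmin k hk1 (hnm ▸ hk2) ?_
    rw [← AdjoinRoot.mk_eq_zero, map_sub, map_pow, AdjoinRoot.mk_X, map_one, sub_eq_zero]
    exact hxk1
  have hx0 : x ≠ 0 := by
    intro h
    have : (1 : K) = 0 := by rw [← hxn, h, zero_pow hnpos.ne']
    exact one_ne_zero this
  -- powers of x are injective on ZMod n
  have hinjnat : ∀ p q : ℕ, p ≤ q → q < n → x ^ p = x ^ q → p = q := by
    intro p q hpq hq h
    by_contra hne
    have hpq2 : x ^ p * x ^ (q - p) = x ^ q := by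
      rw [← pow_add]; congr 1; omega
    have : x ^ p * x ^ (q - p) = x ^ p * 1 := by rw [hpq2, mul_one, h]
    have h2 : x ^ (q - p) = 1 := mul_left_cancel₀ (pow_ne_zero p hx0) this
    exact hxk (q - p) (Nat.sub_pos_of_lt (lt_of_le_of_ne hpq hne))
      (lt_of_le_of_lt (Nat.sub_le q p) hq) h2
  have hinj : ∀ i j : ZMod n, x ^ i.val = x ^ j.val → i = j := by
    intro i j h
    have hi := ZMod.val_lt i
    have hj := ZMod.val_lt j
    have : i.val = j.val := by
      rcases le_total i.val j.val with hle | hle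
      · exact hinjnat _ _ hle hj h
      · exact (hinjnat _ _ hle hi h.symm).symm
    exact ZMod.val_injective n this
  -- image of powers is all nonzero elements
  have hsurj : ∀ y : K, y ≠ 0 → ∃ i : ZMod n, x ^ i.val = y := by
    intro y hy
    have himg : (Finset.univ.image (fun i : ZMod n => x ^ i.val)) =
        Finset.univ.erase (0 : K) := by
      apply Finset.eq_of_subset_of_card_le
      · intro z hz
        simp only [Finset.mem_image] at hz
        obtain ⟨i, _, hi⟩ := hz
        refine Finset.mem_erase.mpr ⟨?_, Finset.mem_univ _⟩
        rw [← hi]; exact pow_ne_zero _ hx0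
      · rw [Finset.card_erase_of_mem (Finset.mem_univ _), Finset.card_univ, hcard,
          Finset.card_image_of_injective _ (fun i j h => hinj i j h), Finset.card_univ,
          ZMod.card]
        omega
    have : y ∈ Finset.univ.erase (0 : K) := Finset.mem_erase.mpr ⟨hy, Finset.mem_univ _⟩
    rw [← himg] at this
    simp only [Finset.mem_image] at this
    obtain ⟨i, _, hi⟩ := this
    exact ⟨i, hi⟩
  -- the linear functional
  have hmpos : 0 < f.natDegree := hdeg ▸ hm
  let L : K →ₗ[ZMod 2] ZMod 2 := b.coord ⟨0, hmpos⟩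
  have hL1 : L (b ⟨0, hmpos⟩) = 1 := by simp [L]
  -- kernel property
  have hLker : ∀ c : K, (∀ i : ZMod n, L (c * x ^ i.val) = 0) → c = 0 := by
    intro c hc
    by_contra hc0
    have : ∀ y : K, L y = 0 := by
      intro y
      rcases eq_or_ne y 0 with rfl | hy
      · exact map_zero L
      · obtain ⟨i, hi⟩ := hsurj (c⁻¹ * y) (by
          apply mul_ne_zero (inv_ne_zero hc0) hy)
        have : c * x ^ i.val = y := by
          rw [hi, ← mul_assoc, mul_inv_cancel₀ hc0, one_mul]
        rw [← this]; exact hc i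
    rw [this (b ⟨0, hmpos⟩)] at hL1
    exact zero_ne_one hL1
  -- x^m in terms of lower powers
  have hxm : x ^ m = -∑ j ∈ Finset.range m, (AdjoinRoot.of f) (f.coeff j) * x ^ j := by
    have h0 : f.eval₂ (AdjoinRoot.of f) x = 0 := AdjoinRoot.eval₂_root f
    rw [Polynomial.eval₂_eq_sum_range] at h0
    rw [hdeg] at h0
    rw [Finset.sum_range_succ] at h0
    have hlc : f.coeff m = 1 := by rw [← hdeg]; exact hmon
    rw [hlc, map_one, one_mul] at h0
    linear_combination h0
  -- exponent arithmetic
  have hxval : ∀ (i : ZMod n) (k : ℕ),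
      x ^ ((i + (k : ZMod n)).val) = x ^ i.val * x ^ k := by
    intro i k
    rw [← pow_add, pow_mod_of_pow_eq_one hxn (i.val + k),
      pow_mod_of_pow_eq_one hxn ((i + (k : ZMod n)).val)]
    congr 1
    rw [Nat.mod_eq_of_lt (ZMod.val_lt _), ZMod.val_add, ZMod.val_natCast]
    conv_rhs => rw [Nat.add_mod]
    rw [Nat.mod_eq_of_lt (ZMod.val_lt i)]
  have hxval2 : ∀ (i j : ZMod n), x ^ ((i + j).val) = x ^ i.val * x ^ j.val := by
    intro i j
    rw [← pow_add, pow_mod_of_pow_eq_one hxn (i.val + j.val),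
      pow_mod_of_pow_eq_one hxn ((i + j).val)]
    congr 1
    rw [Nat.mod_eq_of_lt (ZMod.val_lt _), ZMod.val_add]
  -- the family of solutions
  set ψ : K → ZMod n → ZMod 2 := fun c i => L (c * x ^ i.val) with hψ
  have hψrec : ∀ c : K, ∀ i : ZMod n, ψ c (i + (m : ZMod n)) =
      ∑ j ∈ Finset.range m, f.coeff j * ψ c (i + (j : ZMod n)) := by
    intro c i
    simp only [hψ]
    rw [hxval i m, ← mul_assoc, hxm]
    have : c * x ^ i.val * -∑ j ∈ Finset.range m, (AdjoinRoot.of f) (f.coeff j) * x ^ j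
        = -∑ j ∈ Finset.range m, (f.coeff j) • (c * x ^ i.val * x ^ j) := by
      rw [mul_neg, Finset.mul_sum]
      congr 1
      apply Finset.sum_congr rfl
      intro j _
      rw [Algebra.smul_def]
      show c * x ^ i.val * ((AdjoinRoot.of f) (f.coeff j) * x ^ j) =
        algebraMap (ZMod 2) K (f.coeff j) * (c * x ^ i.val * x ^ j)
      ring_nf
      rw [AdjoinRoot.algebraMap_eq]; exact mul_left_comm _ _ _
    rw [this, map_neg, map_sum]
    have hneg : ∀ w : ZMod 2, -w = w := by decide
    rw [hneg]
    apply Finset.sum_congr rfl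
    intro j hj
    rw [map_smul, smul_eq_mul]
    congr 1
    rw [hxval i j, mul_assoc]
  -- initial-value map is bijective
  set A : K → (Fin m → ZMod 2) := fun c j => ψ c ((j : ℕ) : ZMod n) with hA
  have hA_inj : Function.Injective A := by
    intro c c' h
    have hdiff : ψ (c - c') = 0 := by
      apply rec_ext f _ _ (hψrec (c - c'))
      · intro i
        simp only [Pi.zero_apply, mul_zero]
        rw [Finset.sum_const_zero]
      · intro j hj
        simp only [hψ, Pi.zero_apply, sub_mul, map_sub]
        rw [sub_eq_zero]
        exact congrFun h ⟨j, hj⟩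
    have : c - c' = 0 := by
      apply hLker
      intro i
      have := congrFun hdiff i
      simpa [hψ, sub_mul, map_sub] using this
    exact sub_eq_zero.mp this
  have hA_bij : Function.Bijective A := by
    rw [Fintype.bijective_iff_injective_and_card]
    refine ⟨hA_inj, ?_⟩
    rw [hcard]
    simp [ZMod.card]
  -- express φ as ψ c
  obtain ⟨c, hc⟩ := hA_bij.2 (fun j : Fin m => φ ((j : ℕ) : ZMod n))
  have hφψ : φ = ψ c := by
    apply rec_ext f φ (ψ c) hrec (hψrec c)
    intro j hj
    exact (congrFun hc ⟨j, hj⟩).symm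
  have hc0 : c ≠ 0 := by
    intro h
    apply hφ0
    rw [hφψ, h]
    funext i
    simp [hψ]
  -- the shifted combination
  have hav : 0 < a.val := by
    rcases Nat.eq_zero_or_pos a.val with h | h
    · exact absurd ((ZMod.val_eq_zero a).mp h) ha
    · exact h
  set c' : K := c + c * x ^ a.val with hc'
  have hc'0 : c' ≠ 0 := by
    rw [hc', ← mul_one_add]
    apply mul_ne_zero hc0
    intro h
    have h2 : (1 : K) + 1 = 0 := by
      have h21 : (1 : ZMod 2) + 1 = 0 := by decide
      calc (1 : K) + 1 = algebraMap (ZMod 2) K (1 + 1) := by rw [map_add, map_one]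
        _ = 0 := by rw [h21, map_zero]
    have : x ^ a.val = 1 := by linear_combination h - h2
    exact hxk a.val hav (ZMod.val_lt a) this
  have hterm : ∀ i : ZMod n, φ i + φ (i + a) = L (c' * x ^ i.val) := by
    intro i
    rw [hφψ]
    simp only [hψ]
    rw [← map_add]
    congr 1
    rw [hxval2 i a, hc']
    ring
  -- now the character sum
  have hchar : ∑ y : K, ((-1 : ℤ) ^ (L y).val) = 0 := by
    have hstep : ∀ w : ZMod 2, (-1 : ℤ) ^ ((w + 1).val) = -(-1 : ℤ) ^ w.val := by decide
    have hshift : ∑ y : K, ((-1 : ℤ) ^ (L y).val)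
        = ∑ y : K, ((-1 : ℤ) ^ (L (y + b ⟨0, hmpos⟩)).val) :=
      (Fintype.sum_equiv (Equiv.addRight (b ⟨0, hmpos⟩)) _ _ (fun y => rfl)).symm
    have : ∀ y : K, ((-1 : ℤ) ^ (L (y + b ⟨0, hmpos⟩)).val) = -(-1 : ℤ) ^ (L y).val := by
      intro y
      rw [map_add, hL1, hstep]
    simp only [this] at hshift
    rw [Finset.sum_neg_distrib] at hshift
    linarith [hshift]
  -- final computation
  have hL0val : (L (0 : K)).val = 0 := by rw [map_zero]; rfl
  have hsum_erase : ∑ y ∈ Finset.univ.erase (0 : K), ((-1 : ℤ) ^ (L y).val) = -1 := by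
    have htot : ((-1 : ℤ) ^ (L (0 : K)).val) +
        ∑ y ∈ Finset.univ.erase (0 : K), ((-1 : ℤ) ^ (L y).val) = 0 := by
      rw [Finset.add_sum_erase Finset.univ (fun y : K => ((-1 : ℤ) ^ (L y).val))
        (Finset.mem_univ (0 : K))]
      exact hchar
    rw [hL0val, pow_zero] at htot
    linarith
  calc ∑ i : ZMod n, ((-1 : ℤ) ^ ((φ i + φ (i + a)).val))
      = ∑ y ∈ Finset.univ.erase (0 : K), ((-1 : ℤ) ^ (L y).val) := by
        apply Finset.sum_bij (fun (i : ZMod n) (_ : i ∈ Finset.univ) => c' * x ^ i.val)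
        · intro i _
          refine Finset.mem_erase.mpr ⟨mul_ne_zero hc'0 (pow_ne_zero _ hx0), Finset.mem_univ _⟩
        · intro i _ j _ h
          exact hinj i j (mul_left_cancel₀ hc'0 h)
        · intro y hy
          obtain ⟨hy0, _⟩ := Finset.mem_erase.mp hy
          obtain ⟨i, hi⟩ := hsurj (c'⁻¹ * y) (mul_ne_zero (inv_ne_zero hc'0) hy0)
          exact ⟨i, Finset.mem_univ _, by rw [hi, ← mul_assoc, mul_inv_cancel₀ hc'0, one_mul]⟩
        · intro i _
          rw [hterm i]
    _ = -1 := hsum_erase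

/-- Autocorrelation of an m-sequence is two-valued: it equals `n` at shift `0`
and `−1` at every nonzero shift. -/
theorem mseq_autocorrelation (m n : ℕ) (hm : 3 ≤ m) (hn : n = 2 ^ m - 1) [NeZero n]
    (φ : ZMod n → ZMod 2) (hφ : IsMSequence m n φ) (a : ZMod n) :
    ∑ i : ZMod n, ((-1 : ℤ) ^ ((φ i).val + (φ (i + a)).val)) =
      if a = 0 then (n : ℤ) else -1 := by
  have hkey : ∀ u v : ZMod 2, (-1 : ℤ) ^ (u.val + v.val) = (-1 : ℤ) ^ ((u + v).val) := by
    decide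
  simp only [hkey]
  by_cases h : a = 0
  · subst h
    rw [if_pos rfl]
    have h2 : ∀ u : ZMod 2, u + u = 0 := by decide
    simp only [add_zero, h2]
    simp [ZMod.val_zero, ZMod.card]
  · rw [if_neg h]
    exact balance m n (by omega) hn φ hφ a h
end

section
/- Let n = 2^m − 1 with n ≥ 4 (equivalently m ≥ 3), and let B be the binary Hamming code of length n generated by a primitive polynomial f of degree m, i.e., B = {c ∈ GF(2)^n : f(x) divides c(x)}. Then the set D of palindromic codewords of B (codewords c with c_i = c_{n−1−i} for all i) is a linear subcode of dimension (n+1)/2 − m. -/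
open Polynomial

namespace PalAux

lemma zmod2_eq_one {x : ZMod 2} (h : x ≠ 0) : x = 1 := by
  revert h; revert x; decide

lemma zmod2_sq (x : ZMod 2) : x ^ 2 = x := by
  revert x; decide

lemma two_pow_aux {m : ℕ} (hm : 3 ≤ m) : m + 1 ≤ 2 ^ (m - 1) := by
  induction m with
  | zero => omega
  | succ t ih =>
    rcases Nat.lt_or_ge t 3 with h | h
    · interval_cases t <;> simp_all <;> omega
    · have := ih (by omega)
      have ht : t - 1 + 1 = t := by omega
      have : 2 ^ (t - 1) * 2 = 2 ^ t := by
        rw [← pow_succ, ht]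
      simp only [Nat.succ_sub_one]
      omega

lemma natDegree_reflect_le {R : Type*} [Semiring R] (f : R[X]) {N : ℕ} (h : f.natDegree ≤ N) :
    (reflect N f).natDegree ≤ N := by
  rw [natDegree_le_iff_coeff_eq_zero]
  intro i hi
  rw [coeff_reflect, revAt_eq_self_of_lt hi]
  exact coeff_eq_zero_of_natDegree_lt (by omega)

lemma reflect_reflect {R : Type*} [Semiring R] (f : R[X]) (N : ℕ) :
    reflect N (reflect N f) = f := by
  ext i
  rw [coeff_reflect, coeff_reflect, revAt_invol]

lemma coeff_zero_ne_zero {m : ℕ} (hm : 3 ≤ m) {f : (ZMod 2)[X]} (hirr : Irreducible f)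
    (hdeg : f.natDegree = m) : f.coeff 0 ≠ 0 := by
  intro h
  obtain ⟨g, hg⟩ := X_dvd_iff.mpr h
  have hg0 : g ≠ 0 := by
    rintro rfl
    rw [mul_zero] at hg
    exact hirr.ne_zero hg
  rcases hirr.isUnit_or_isUnit hg with h1 | h1
  · exact not_isUnit_X h1
  · have h2 := natDegree_eq_zero_of_isUnit h1
    have h3 : f.natDegree = 1 := by
      rw [hg, natDegree_mul X_ne_zero hg0, natDegree_X, h2]
    omega

lemma aeval_sq {F : Type*} [CommRing F] [Algebra (ZMod 2) F] [CharP F 2] (β : F)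
    (p : (ZMod 2)[X]) : aeval (β ^ 2) p = (aeval β p) ^ 2 := by
  haveI : ExpChar F 2 := ExpChar.prime Nat.prime_two
  rw [aeval_eq_sum_range (x := β), aeval_eq_sum_range (x := β ^ 2), sum_pow_char]
  refine Finset.sum_congr rfl fun i _ => ?_
  rw [_root_.smul_pow, ← pow_mul, ← pow_mul', zmod2_sq]

/-- Key lemma: a primitive polynomial of degree `m ≥ 3` does not divide its reflection. -/
lemma not_dvd_reflect {m : ℕ} (hm : 3 ≤ m) (f : (ZMod 2)[X]) (hf : IsPrimitivePoly f)
    (hdeg : f.natDegree = m) : ¬ f ∣ reflect m f := by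
  obtain ⟨hirr, hdvd, hmin⟩ := hf
  rw [hdeg] at hdvd hmin
  set n := 2 ^ m - 1 with hn
  have h8 : 8 ≤ 2 ^ m := by
    calc (8 : ℕ) = 2 ^ 3 := by norm_num
    _ ≤ 2 ^ m := Nat.pow_le_pow_right (by norm_num) hm
  have h2m : 2 ^ (m - 1) * 2 = 2 ^ m := by
    rw [← pow_succ, Nat.sub_add_cancel (by omega)]
  have hmle : m + 1 ≤ 2 ^ (m - 1) := two_pow_aux hm
  have hf0 : f ≠ 0 := hirr.ne_zero
  have hc0 : f.coeff 0 ≠ 0 := coeff_zero_ne_zero hm hirr hdeg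
  intro hdd
  -- first, f ∣ reflect m f forces reflect m f = f
  have hrne : reflect m f ≠ 0 := by rwa [Ne, reflect_eq_zero_iff]
  have hrdeg : (reflect m f).natDegree ≤ m := natDegree_reflect_le f (le_of_eq hdeg)
  obtain ⟨u, hu⟩ := hdd
  have hu0 : u ≠ 0 := by
    rintro rfl
    rw [mul_zero] at hu
    exact hrne hu
  have hudeg : u.natDegree = 0 := by
    have h1 : (reflect m f).natDegree = f.natDegree + u.natDegree := by
      rw [hu, natDegree_mul hf0 hu0]
    omega
  have hu1 : u = 1 := by
    have h2 := eq_C_of_natDegree_eq_zero hudeg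
    have h3 : u.coeff 0 ≠ 0 := fun h => hu0 (by rw [h2, h, map_zero])
    rw [h2, zmod2_eq_one h3, map_one]
  have heq : reflect m f = f := by rw [hu, hu1, mul_one]
  -- pass to the field F = GF(2)[X]/(f)
  haveI : Fact (Irreducible f) := ⟨hirr⟩
  set F := AdjoinRoot f with hF
  set α : F := AdjoinRoot.root f with hα
  haveI : CharP F 2 :=
    charP_of_injective_algebraMap (algebraMap (ZMod 2) F).injective 2
  have hzero : ∀ g : (ZMod 2)[X], aeval α g = 0 ↔ f ∣ g := fun g => by
    rw [hα, AdjoinRoot.aeval_eq, AdjoinRoot.mk_eq_zero]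
  have hαn : α ^ n = 1 := by
    have h1 := (hzero _).mpr hdvd
    rw [map_sub, map_one, map_pow, aeval_X, sub_eq_zero] at h1
    exact h1
  have hα0 : α ≠ 0 := by
    intro h
    rw [h, zero_pow (by omega : n ≠ 0)] at hαn
    exact zero_ne_one hαn
  have horder : ∀ k : ℕ, 0 < k → k < n → α ^ k ≠ 1 := by
    intro k hk1 hk2 h
    refine hmin k hk1 hk2 ((hzero _).mp ?_)
    rw [map_sub, map_one, map_pow, aeval_X, h, sub_self]
  have hpow_ne : ∀ a b : ℕ, a < b → b - a < n → α ^ a ≠ α ^ b := by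
    intro a b hab hbn h
    have h1 : α ^ a * α ^ (b - a) = α ^ a * 1 := by
      rw [mul_one, ← pow_add, Nat.add_sub_cancel' (le_of_lt hab), h]
    have h2 := mul_left_cancel₀ (pow_ne_zero a hα0) h1
    exact horder (b - a) (by omega) hbn h2
  -- the conjugates of α are roots of f
  have hroots : ∀ j : ℕ, aeval (α ^ 2 ^ j) f = 0 := by
    intro j
    induction j with
    | zero => simpa using (hzero f).mpr dvd_rfl
    | succ j ih =>
      have h1 : α ^ 2 ^ (j + 1) = (α ^ 2 ^ j) ^ 2 := by
        rw [← pow_mul, pow_succ]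
      rw [h1, aeval_sq, ih]
      ring
  -- and α⁻¹ is also a root of f
  haveI : Invertible α := invertibleOfNonzero hα0
  have hinv : aeval α⁻¹ f = 0 := by
    have h1 : eval₂ (algebraMap (ZMod 2) F) (⅟ α) (reflect m f) = 0 ↔
        eval₂ (algebraMap (ZMod 2) F) α f = 0 :=
      eval₂_reflect_eq_zero_iff (algebraMap (ZMod 2) F) α m f (le_of_eq hdeg)
    rw [heq] at h1
    have h2 := h1.mpr (by rw [← aeval_def]; exact (hzero f).mpr dvd_rfl)
    rw [← invOf_eq_inv α, aeval_def]
    exact h2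
  -- counting roots
  set fm := f.map (algebraMap (ZMod 2) F) with hfm
  have hfm0 : fm ≠ 0 := map_ne_zero hf0
  have hfmdeg : fm.natDegree = m := by rw [hfm, natDegree_map, hdeg]
  have hmem : ∀ β : F, aeval β f = 0 → β ∈ fm.roots.toFinset := by
    intro β hβ
    rw [Multiset.mem_toFinset, mem_roots hfm0, IsRoot, hfm, eval_map, ← aeval_def]
    exact hβ
  set S : Finset F := insert α⁻¹ ((Finset.range m).image fun j => α ^ 2 ^ j) with hS
  have hsub : S ⊆ fm.roots.toFinset := by
    intro β hβ
    rw [hS, Finset.mem_insert] at hβ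
    rcases hβ with h | h
    · exact h ▸ hmem _ hinv
    · obtain ⟨j, _, rfl⟩ := Finset.mem_image.mp h
      exact hmem _ (hroots j)
  have hpowle : ∀ j, j < m → 2 ^ j ≤ 2 ^ (m - 1) :=
    fun j hj => Nat.pow_le_pow_right (by norm_num) (by omega)
  have hhalf : 2 ^ (m - 1) + 1 < n := by omega
  have himg_card : ((Finset.range m).image fun j => α ^ 2 ^ j).card = m := by
    rw [Finset.card_image_of_injOn, Finset.card_range]
    intro i hi j hj hij
    simp only [Finset.coe_range, Set.mem_Iio] at hi hj
    by_contra hne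
    rcases Nat.lt_or_ge i j with h | h
    · have hlt : 2 ^ i < 2 ^ j := Nat.pow_lt_pow_right (by norm_num) h
      have hle2 : 2 ^ j - 2 ^ i < n :=
        lt_of_le_of_lt (Nat.sub_le _ _) (lt_of_le_of_lt (hpowle j hj) (by omega))
      exact hpow_ne (2 ^ i) (2 ^ j) hlt hle2 hij
    · have h' : j < i := by omega
      have hlt : 2 ^ j < 2 ^ i := Nat.pow_lt_pow_right (by norm_num) h'
      have hle2 : 2 ^ i - 2 ^ j < n :=
        lt_of_le_of_lt (Nat.sub_le _ _) (lt_of_le_of_lt (hpowle i hi) (by omega))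
      exact hpow_ne (2 ^ j) (2 ^ i) hlt hle2 hij.symm
  have hnotmem : α⁻¹ ∉ (Finset.range m).image fun j => α ^ 2 ^ j := by
    intro h
    obtain ⟨j, hj, hj2⟩ := Finset.mem_image.mp h
    rw [Finset.mem_range] at hj
    have h1 : α ^ (2 ^ j + 1) = 1 := by
      rw [pow_succ, hj2, inv_mul_cancel₀ hα0]
    have hle2 : 2 ^ j + 1 < n :=
      lt_of_le_of_lt (Nat.add_le_add_right (hpowle j hj) 1) hhalf
    exact horder (2 ^ j + 1) (Nat.succ_pos _) hle2 h1
  have hcard : S.card = m + 1 := by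
    rw [hS, Finset.card_insert_of_notMem hnotmem, himg_card]
  have hle : S.card ≤ m := by
    calc S.card ≤ fm.roots.toFinset.card := Finset.card_le_card hsub
      _ ≤ Multiset.card fm.roots := Multiset.toFinset_card_le _
      _ ≤ fm.natDegree := card_roots' fm
      _ = m := hfmdeg
  omega

lemma coeff_fin_sum {n : ℕ} (c : Fin n → ZMod 2) (t : ℕ) :
    (∑ i : Fin n, C (c i) * X ^ (i : ℕ)).coeff t = if h : t < n then c ⟨t, h⟩ else 0 := by
  rw [finset_sum_coeff]
  simp only [coeff_C_mul, coeff_X_pow, mul_ite, mul_one, mul_zero]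
  split
  · next h =>
    rw [Finset.sum_eq_single (⟨t, h⟩ : Fin n)]
    · simp
    · intro b _ hb
      have hbt : t ≠ (b : ℕ) := fun hbt => hb (Fin.ext hbt.symm)
      rw [if_neg hbt]
    · intro hmem
      exact absurd (Finset.mem_univ _) hmem
  · next h =>
    refine Finset.sum_eq_zero fun b _ => ?_
    have hbt : t ≠ (b : ℕ) := fun h2 => h (h2 ▸ b.isLt)
    rw [if_neg hbt]

lemma fin_sum_eq {n : ℕ} (q : (ZMod 2)[X]) (hq : q.natDegree < n) :
    ∑ i : Fin n, C (q.coeff (i : ℕ)) * X ^ (i : ℕ) = q := by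
  rw [Fin.sum_univ_eq_sum_range (fun j => C (q.coeff j) * X ^ j) n]
  simp only [C_mul_X_pow_eq_monomial]
  exact (as_sum_range' q n hq).symm

/-- the index map folding `j ≤ d` onto `min j (d - j) ≤ d/2`. -/
def symIdx (d j : ℕ) : Fin (d / 2 + 1) :=
  ⟨min j (d - j), by
    have h1 := Nat.min_le_left j (d - j)
    have h2 := Nat.min_le_right j (d - j)
    omega⟩

/-- the linear map sending `a` to the palindromic polynomial of degree `≤ d`
whose coefficients are given symmetrically by `a`. -/
noncomputable def palL (d : ℕ) : (Fin (d / 2 + 1) → ZMod 2) →ₗ[ZMod 2] (ZMod 2)[X] :=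
  ∑ j ∈ Finset.range (d + 1),
    LinearMap.smulRight (LinearMap.proj (symIdx d j)) ((X : (ZMod 2)[X]) ^ j)

lemma palL_coeff (d : ℕ) (a : Fin (d / 2 + 1) → ZMod 2) (t : ℕ) :
    (palL d a).coeff t = if t ≤ d then a (symIdx d t) else 0 := by
  simp only [palL, LinearMap.coe_sum, Finset.sum_apply, LinearMap.smulRight_apply,
    LinearMap.proj_apply, finset_sum_coeff, coeff_smul, coeff_X_pow, smul_eq_mul, mul_ite,
    mul_one, mul_zero]
  rw [Finset.sum_ite_eq (Finset.range (d + 1)) t (fun j => a (symIdx d j))]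
  simp [Nat.lt_succ_iff]

lemma palL_deg (d : ℕ) (a : Fin (d / 2 + 1) → ZMod 2) : (palL d a).natDegree ≤ d :=
  natDegree_le_iff_coeff_eq_zero.mpr fun t ht => by
    rw [palL_coeff]; exact if_neg (by omega)

lemma palL_reflect (d : ℕ) (a : Fin (d / 2 + 1) → ZMod 2) :
    reflect d (palL d a) = palL d a := by
  ext t
  rw [coeff_reflect]
  rcases le_or_gt t d with h | h
  · rw [revAt_le h, palL_coeff, palL_coeff, if_pos (Nat.sub_le d t), if_pos h]
    congr 1
    apply Fin.ext
    show min (d - t) (d - (d - t)) = min t (d - t)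
    rw [Nat.sub_sub_self h, Nat.min_comm]
  · rw [revAt_eq_self_of_lt h]

lemma palL_eq_zero {d : ℕ} {a : Fin (d / 2 + 1) → ZMod 2} (h : palL d a = 0) : a = 0 := by
  funext i
  have hi : (i : ℕ) ≤ d / 2 := by have := i.isLt; omega
  have h2 : 2 * (d / 2) ≤ d := by omega
  have h6 : (palL d a).coeff (i : ℕ) = a (symIdx d (i : ℕ)) := by
    rw [palL_coeff]; exact if_pos (by omega)
  have h7 : symIdx d (i : ℕ) = i := by
    apply Fin.ext
    show min (i : ℕ) (d - (i : ℕ)) = (i : ℕ)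
    exact min_eq_left (by omega)
  rw [h, coeff_zero, h7] at h6
  exact h6.symm

lemma recover_pal {d : ℕ} {q : (ZMod 2)[X]} (hdeg : q.natDegree ≤ d)
    (hrefl : reflect d q = q) : palL d (fun i => q.coeff (i : ℕ)) = q := by
  ext t
  rw [palL_coeff]
  rcases le_or_gt t d with h | h
  · rw [if_pos h]
    show q.coeff (min t (d - t)) = q.coeff t
    rcases le_total t (d - t) with h5 | h5
    · rw [min_eq_left h5]
    · rw [min_eq_right h5]
      conv_rhs => rw [← hrefl]
      rw [coeff_reflect, revAt_le h]
  · rw [if_neg (by omega)]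
    exact (coeff_eq_zero_of_natDegree_lt (by omega)).symm

end PalAux

open PalAux

/-- The palindromic codewords of the binary Hamming code of length `n = 2^m − 1`
(generated by a primitive polynomial `f` of degree `m`, `m ≥ 3`) form a linear
subcode of dimension `(n+1)/2 − m`. -/
theorem palindrome_subcode_dim (m n : ℕ) (hm : 3 ≤ m) (hn : n = 2 ^ m - 1)
    (f : Polynomial (ZMod 2)) (hf : IsPrimitivePoly f) (hdeg : f.natDegree = m) :
    ∃ W : Submodule (ZMod 2) (Fin n → ZMod 2),
      (W : Set (Fin n → ZMod 2)) =
        {c | f ∣ (∑ i : Fin n, Polynomial.C (c i) * X ^ (i : ℕ)) ∧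
          ∀ i j : Fin n, (i : ℕ) + (j : ℕ) = n - 1 → c i = c j} ∧
      Module.finrank (ZMod 2) W = (n + 1) / 2 - m := by
  have hirr := hf.1
  have hf0 : f ≠ 0 := hirr.ne_zero
  have hc0 : f.coeff 0 ≠ 0 := coeff_zero_ne_zero hm hirr hdeg
  have h8 : 8 ≤ 2 ^ m := by
    calc (8 : ℕ) = 2 ^ 3 := by norm_num
    _ ≤ 2 ^ m := Nat.pow_le_pow_right (by norm_num) hm
  have h2m : 2 ^ (m - 1) * 2 = 2 ^ m := by
    rw [← pow_succ, Nat.sub_add_cancel (by omega)]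
  have hmle : m + 1 ≤ 2 ^ (m - 1) := two_pow_aux hm
  have hrne : reflect m f ≠ 0 := by rwa [Ne, reflect_eq_zero_iff]
  have hrdeg : (reflect m f).natDegree ≤ m := natDegree_reflect_le f hdeg.le
  have hrdege : (reflect m f).natDegree = m := by
    refine le_antisymm hrdeg (le_natDegree_of_ne_zero ?_)
    rw [coeff_reflect, revAt_le (le_refl m), Nat.sub_self]
    exact hc0
  have hcop : IsCoprime f (reflect m f) :=
    hirr.coprime_iff_not_dvd.mpr (not_dvd_reflect hm f hf hdeg)
  set g := f * reflect m f with hgdef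
  have hg0 : g ≠ 0 := mul_ne_zero hf0 hrne
  have hgdeg : g.natDegree = 2 * m := by
    rw [hgdef, natDegree_mul hf0 hrne, hdeg, hrdege]; ring
  have hgrefl : reflect (2 * m) g = g := by
    rw [hgdef, show 2 * m = m + m from by ring, reflect_mul f _ hdeg.le hrdeg,
      PalAux.reflect_reflect, mul_comm]
  set d := n - 1 - 2 * m with hd
  have hsum_deg : 2 * m + d = n - 1 := by omega
  -- the linear code map
  set L : (Fin (d / 2 + 1) → ZMod 2) →ₗ[ZMod 2] (Fin n → ZMod 2) :=
    (LinearMap.pi fun i : Fin n => lcoeff (ZMod 2) (i : ℕ)).comp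
      ((LinearMap.mulLeft (ZMod 2) g).comp (palL d)) with hL
  have hLa : ∀ a (i : Fin n), L a i = (g * palL d a).coeff (i : ℕ) := by
    intro a i
    simp [hL, LinearMap.mulLeft_apply, lcoeff_apply]
  have hqdeg : ∀ a, (g * palL d a).natDegree ≤ n - 1 := fun a =>
    le_trans natDegree_mul_le (by have := palL_deg d a; omega)
  have hq_refl : ∀ a, reflect (n - 1) (g * palL d a) = g * palL d a := by
    intro a
    rw [← hsum_deg, reflect_mul g (palL d a) hgdeg.le (palL_deg d a), hgrefl, palL_reflect]
  refine ⟨LinearMap.range L, ?_, ?_⟩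
  · ext c
    simp only [SetLike.mem_coe, LinearMap.mem_range, Set.mem_setOf_eq]
    constructor
    · rintro ⟨a, rfl⟩
      have hps : ∑ i : Fin n, C (L a i) * X ^ (i : ℕ) = g * palL d a := by
        have h1 := fin_sum_eq (g * palL d a) (show _ < n by have := hqdeg a; omega)
        calc ∑ i : Fin n, C (L a i) * X ^ (i : ℕ)
            = ∑ i : Fin n, C ((g * palL d a).coeff (i : ℕ)) * X ^ (i : ℕ) :=
              Finset.sum_congr rfl fun i _ => by rw [hLa]
          _ = g * palL d a := h1
      refine ⟨?_, ?_⟩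
      · rw [hps, hgdef]
        exact (dvd_mul_right f (reflect m f)).mul_right _
      · intro i j hij
        rw [hLa a i, hLa a j]
        have h1 : (i : ℕ) ≤ n - 1 := by have := i.isLt; omega
        calc (g * palL d a).coeff (i : ℕ)
            = (reflect (n - 1) (g * palL d a)).coeff (i : ℕ) := by rw [hq_refl]
          _ = (g * palL d a).coeff (revAt (n - 1) (i : ℕ)) := coeff_reflect _ _ _
          _ = (g * palL d a).coeff (j : ℕ) := by rw [revAt_le h1]; congr 1; omega
    · rintro ⟨hdvdc, hpalc⟩
      set p₀ := ∑ i : Fin n, C (c i) * X ^ (i : ℕ) with hp₀def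
      have hp₀c : ∀ t, p₀.coeff t = if h : t < n then c ⟨t, h⟩ else 0 := coeff_fin_sum c
      have hp₀deg : p₀.natDegree ≤ n - 1 :=
        natDegree_le_iff_coeff_eq_zero.mpr fun t ht => by
          rw [hp₀c]; exact dif_neg (by omega)
      have hself : reflect (n - 1) p₀ = p₀ := by
        ext t
        rw [coeff_reflect]
        rcases Nat.lt_or_ge t n with h | h
        · rw [revAt_le (by omega), hp₀c, hp₀c, dif_pos (show n - 1 - t < n by omega),
            dif_pos h]
          exact hpalc ⟨n - 1 - t, by omega⟩ ⟨t, h⟩ (by simp; omega)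
        · rw [revAt_eq_self_of_lt (by omega)]
      by_cases hp0 : p₀ = 0
      · refine ⟨0, ?_⟩
        rw [map_zero]
        funext i
        have h9 := hp₀c (i : ℕ)
        rw [hp0, coeff_zero, dif_pos i.isLt] at h9
        simpa using h9
      · obtain ⟨q₁, hq₁⟩ := hdvdc
        have hq₁0 : q₁ ≠ 0 := by rintro rfl; rw [mul_zero] at hq₁; exact hp0 hq₁
        have hmul1 : p₀.natDegree = m + q₁.natDegree := by
          rw [hq₁, natDegree_mul hf0 hq₁0, hdeg]
        have hq₁deg : q₁.natDegree ≤ n - 1 - m := by omega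
        have hrd : reflect m f ∣ p₀ := by
          refine ⟨reflect (n - 1 - m) q₁, ?_⟩
          have h2 : n - 1 = m + (n - 1 - m) := by omega
          conv_lhs => rw [← hself, hq₁]
          rw [h2, reflect_mul f q₁ hdeg.le hq₁deg]
          have h3 : m + (n - 1 - m) - m = n - 1 - m := by omega
          rw [h3]
        have hgd : g ∣ p₀ := hcop.mul_dvd ⟨q₁, hq₁⟩ hrd
        obtain ⟨q, hq⟩ := hgd
        have hq0 : q ≠ 0 := by rintro rfl; rw [mul_zero] at hq; exact hp0 hq
        have hqd : q.natDegree ≤ d := by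
          have h3 : p₀.natDegree = 2 * m + q.natDegree := by
            rw [hq, natDegree_mul hg0 hq0, hgdeg]
          omega
        have hqrefl : reflect d q = q := by
          have h4 : g * q = g * reflect d q := by
            calc g * q = p₀ := hq.symm
              _ = reflect (n - 1) p₀ := hself.symm
              _ = reflect (n - 1) (g * q) := by rw [hq]
              _ = reflect (2 * m) g * reflect d q := by
                  rw [← hsum_deg]; exact reflect_mul g q hgdeg.le hqd
              _ = g * reflect d q := by rw [hgrefl]
          exact (mul_left_cancel₀ hg0 h4).symm
        refine ⟨fun i => q.coeff (i : ℕ), ?_⟩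
        have hpq : palL d (fun i => q.coeff (i : ℕ)) = q := recover_pal hqd hqrefl
        funext i
        rw [hLa, hpq, ← hq, hp₀c, dif_pos i.isLt]
  · have hker : ∀ a, L a = 0 → a = 0 := by
      intro a ha
      have hq0 : g * palL d a = 0 := by
        ext t
        rw [coeff_zero]
        rcases Nat.lt_or_ge t n with h | h
        · have h5 := congrFun ha (⟨t, h⟩ : Fin n)
          rw [hLa] at h5
          simpa using h5
        · exact coeff_eq_zero_of_natDegree_lt (lt_of_le_of_lt (hqdeg a) (by omega))
      rcases mul_eq_zero.mp hq0 with h | h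
      · exact absurd h hg0
      · exact palL_eq_zero h
    have hinj : Function.Injective L := by
      intro a b hab
      have h6 : L (a - b) = 0 := by rw [map_sub, hab, sub_self]
      exact sub_eq_zero.mp (hker _ h6)
    rw [LinearMap.finrank_range_of_inj hinj, Module.finrank_fin_fun]
    omega
end

section
/- Let f be an irreducible polynomial over GF(2) of degree m ≥ 3 that is not self-reciprocal, and let c ∈ GF(2)[x] with deg c ≤ n−1 satisfy c(x) = x^{n−1} c(1/x) (palindrome of length n) and f(x) | c(x). Then f(x)·f̂(x) divides c(x), where f̂(x) = x^m f(1/x) is the reciprocal polynomial. -/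
open Polynomial

/-- If `f` over `GF(2)` is irreducible of degree `m ≥ 3` and not self-reciprocal,
and `c` is a palindrome of length `n` (i.e. `deg c ≤ n−1` and `c(x) = x^{n−1} c(1/x)`)
divisible by `f`, then `c` is divisible by `f·f̂`, where `f̂(x) = x^m f(1/x)` is the
reciprocal polynomial. -/
theorem palindrome_divisible_by_reciprocal (m n : ℕ) (hm : 3 ≤ m)
    (f : Polynomial (ZMod 2)) (hf : Irreducible f) (hdeg : f.natDegree = m)
    (hsr : f.reverse ≠ f)
    (c : Polynomial (ZMod 2)) (hcdeg : c.natDegree ≤ n - 1)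
    (hpal : Polynomial.reflect (n - 1) c = c) (hfc : f ∣ c) :
    f * f.reverse ∣ c := by
  rcases eq_or_ne c 0 with rfl | hc0
  · exact dvd_zero _
  obtain ⟨g, rfl⟩ := hfc
  have hf0 : f ≠ 0 := hf.ne_zero
  have hg0 : g ≠ 0 := by rintro rfl; simp at hc0
  have hmle : m + g.natDegree ≤ n - 1 := by
    rw [← hdeg, ← natDegree_mul hf0 hg0]; exact hcdeg
  have hsplit : n - 1 = m + (n - 1 - m) := by omega
  have hrefl : reflect (n - 1) (f * g) = f.reverse * reflect (n - 1 - m) g := by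
    rw [hsplit, reflect_mul f g (le_of_eq hdeg) (by omega)]
    congr 1
    · rw [reverse, hdeg]
    · congr 1; omega
  have hrdvd : f.reverse ∣ f * g := by
    rw [← hpal, hrefl]; exact Dvd.intro _ rfl
  have hmonic : f.Monic := by
    have := hf0
    rw [Ne, ← leadingCoeff_eq_zero] at this
    have : f.leadingCoeff = 1 := by
      revert this; generalize f.leadingCoeff = a; revert a; decide
    exact this
  have hnd : ¬ f ∣ f.reverse := by
    intro hdvd
    obtain ⟨u, hu⟩ := hdvd
    have hr0 : f.reverse ≠ 0 := by rwa [Ne, reverse_eq_zero]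
    have hu0 : u ≠ 0 := by rintro rfl; rw [mul_zero] at hu; exact hr0 hu
    have hdu : u.natDegree = 0 := by
      have h1 : f.reverse.natDegree ≤ f.natDegree := reverse_natDegree_le f
      have h2 : f.reverse.natDegree = f.natDegree + u.natDegree := by
        rw [hu, natDegree_mul hf0 hu0]
      omega
    have humonic : u.Monic := by
      have hl : f.reverse.leadingCoeff = f.leadingCoeff * u.leadingCoeff := by
        rw [hu, leadingCoeff_mul]
      rw [hmonic, one_mul] at hl
      have : u.leadingCoeff ≠ 0 := by rwa [Ne, leadingCoeff_eq_zero]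
      have : u.leadingCoeff = 1 := by
        revert this; generalize u.leadingCoeff = a; revert a; decide
      exact this
    have : u = 1 := eq_one_of_monic_natDegree_zero humonic hdu
    rw [this, mul_one] at hu
    exact hsr hu
  exact (hf.coprime_iff_not_dvd.mpr hnd).mul_dvd (dvd_mul_right _ _) hrdvd
end

section
/- Let r be a fixed even positive integer. The number of closed walks of length r on the complete graph on n labeled vertices (with loops allowed) in which each traversed edge is traversed an even number of times and which visit exactly r/2 + 1 distinct vertices is C_{r/2}·n^{r/2+1} + O(n^{r/2}) as n → ∞, where C_k is the k-th Catalan number. -/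
open Finset List DyckStep

namespace EWC

/-! ### Pair edges of a list (stack path) -/

variable {V : Type*} [DecidableEq V]

/-- edges between consecutive elements of a list -/
def pE : List V → Finset (Sym2 V)
  | [] => ∅
  | [_] => ∅
  | a :: b :: l => insert s(a, b) (pE (b :: l))

@[simp] lemma pE_nil : pE ([] : List V) = ∅ := rfl
@[simp] lemma pE_single (a : V) : pE [a] = ∅ := rfl
@[simp] lemma pE_cons_cons (a b : V) (l : List V) :
    pE (a :: b :: l) = insert s(a, b) (pE (b :: l)) := rfl

lemma pE_endpoints {l : List V} {e : Sym2 V} (he : e ∈ pE l) :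
    ∀ x ∈ e, x ∈ l := by
  induction l with
  | nil => simp at he
  | cons a l ih =>
    cases l with
    | nil => simp at he
    | cons b m =>
      rw [pE_cons_cons, Finset.mem_insert] at he
      rcases he with h | h
      · subst h
        intro x hx
        rw [Sym2.mem_iff] at hx
        rcases hx with h | h <;> simp [h]
      · intro x hx
        have := ih h x hx
        exact List.mem_cons_of_mem _ this

lemma pE_head {a b : V} {m : List V} (hnd : (a :: b :: m).Nodup) {e : Sym2 V}
    (he : e ∈ pE (a :: b :: m)) (ha : a ∈ e) : e = s(a, b) := by
  rw [pE_cons_cons, Finset.mem_insert] at he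
  rcases he with h | h
  · exact h
  · exfalso
    have := pE_endpoints h a ha
    simp only [List.nodup_cons] at hnd
    exact hnd.1 this

lemma pE_eq_empty_iff {l : List V} : pE l = ∅ ↔ l.length ≤ 1 := by
  match l with
  | [] => simp
  | [a] => simp
  | a :: b :: m => simp [pE_cons_cons]


/-! ### Generic list helpers -/

lemma getLast?_tail_of_two_le {α : Type*} {l : List α} (h : 2 ≤ l.length) :
    l.tail.getLast? = l.getLast? := by
  match l, h with
  | a :: b :: m, _ => simp [List.getLast?_cons_cons]

lemma getLast?_cons_of_ne_nil {α : Type*} {a : α} {l : List α} (h : l ≠ []) :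
    (a :: l).getLast? = l.getLast? := by
  match l, h with
  | b :: m, _ => simp [List.getLast?_cons_cons]

lemma eq_singleton_of_length_one_getLast? {α : Type*} {l : List α} {x : α}
    (h1 : l.length = 1) (h2 : l.getLast? = some x) : l = [x] := by
  match l, h1 with
  | [a], _ => simpa using h2

/-! ### Words -/

/-- number of `true`s (i.e. `U` steps) in the first `t` letters -/
def cntU (b : ℕ → Bool) (t : ℕ) : ℕ := ((Finset.range t).filter (fun s => b s)).card

@[simp] lemma cntU_zero (b : ℕ → Bool) : cntU b 0 = 0 := by simp [cntU]

lemma cntU_succ (b : ℕ → Bool) (t : ℕ) :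
    cntU b (t + 1) = cntU b t + (if b t then 1 else 0) := by
  unfold cntU
  rw [Finset.range_add_one, Finset.filter_insert]
  split
  · rw [Finset.card_insert_of_notMem (by simp)]
  · simp

lemma cntU_mono (b : ℕ → Bool) : Monotone (cntU b) := by
  intro s t h
  unfold cntU
  exact Finset.card_le_card (Finset.filter_subset_filter _ (Finset.range_subset_range.2 h))

lemma cntU_le (b : ℕ → Bool) (t : ℕ) : cntU b t ≤ t := by
  unfold cntU
  simpa using (Finset.card_filter_le (Finset.range t) (fun s => b s = true))

lemma cntU_congr {b b' : ℕ → Bool} {t : ℕ} (h : ∀ s < t, b s = b' s) :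
    cntU b t = cntU b' t := by
  unfold cntU
  congr 1
  apply Finset.filter_congr
  intro s hs
  rw [h s (Finset.mem_range.1 hs)]

/-- the stack of vertex labels along the Dyck path -/
def stk (b : ℕ → Bool) : ℕ → List ℕ
  | 0 => [0]
  | t + 1 => if b t then (cntU b t + 1) :: stk b t else (stk b t).tail

@[simp] lemma stk_zero (b : ℕ → Bool) : stk b 0 = [0] := rfl

lemma stk_succ_true {b : ℕ → Bool} {t : ℕ} (h : b t) :
    stk b (t + 1) = (cntU b t + 1) :: stk b t := by simp [stk, h]

lemma stk_succ_false {b : ℕ → Bool} {t : ℕ} (h : ¬ b t) :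
    stk b (t + 1) = (stk b t).tail := by simp [stk, h]

lemma stk_congr {b b' : ℕ → Bool} {t : ℕ} (h : ∀ s < t, b s = b' s) :
    stk b t = stk b' t := by
  induction t with
  | zero => rfl
  | succ t ih =>
    have ih' := ih (fun s hs => h s (Nat.lt_succ_of_lt hs))
    have hbt := h t (Nat.lt_succ_self t)
    by_cases hb : b t
    · rw [stk_succ_true hb, stk_succ_true (hbt ▸ hb), ih',
        cntU_congr (fun s hs => h s (Nat.lt_succ_of_lt hs))]
    · rw [stk_succ_false hb, stk_succ_false (hbt ▸ hb), ih']

section WordInv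

variable {b : ℕ → Bool} {k : ℕ}

lemma stk_inv (hb1 : ∀ t ≤ 2 * k, t ≤ 2 * cntU b t) :
    ∀ t, t ≤ 2 * k →
      (stk b t).length + t = 1 + 2 * cntU b t ∧
      (stk b t).getLast? = some 0 ∧
      List.Chain' (· > ·) (stk b t) ∧
      ∀ x ∈ stk b t, x ≤ cntU b t := by
  intro t
  induction t with
  | zero => simp [List.Chain']
  | succ t ih =>
    intro ht
    obtain ⟨hlen, hlast, hch, hle⟩ := ih (le_trans (Nat.le_succ t) ht)
    have hlen1 : 1 ≤ (stk b t).length := by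
      have := hb1 t (le_trans (Nat.le_succ t) ht); omega
    have hne : stk b t ≠ [] := by
      intro h; rw [h] at hlen1; simp at hlen1
    by_cases hbt : b t
    · have hc : cntU b (t + 1) = cntU b t + 1 := by rw [cntU_succ]; simp [hbt]
      rw [stk_succ_true hbt]
      refine ⟨by simp only [List.length_cons, hc]; omega, ?_, ?_, ?_⟩
      · rw [getLast?_cons_of_ne_nil hne]; exact hlast
      · unfold List.Chain'; rw [List.isChain_cons]
        refine ⟨fun y hy => ?_, hch⟩
        have : y ∈ stk b t := List.mem_of_mem_head? hy
        have := hle y this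
        omega
      · intro x hx
        rcases List.mem_cons.1 hx with h | h
        · omega
        · have := hle x h; omega
    · have hc : cntU b (t + 1) = cntU b t := by rw [cntU_succ]; simp [hbt]
      have h2 : 2 ≤ (stk b t).length := by
        have := hb1 (t + 1) ht
        rw [hc] at this
        omega
      rw [stk_succ_false hbt]
      refine ⟨?_, ?_, hch.tail, fun x hx => hc ▸ hle x (List.mem_of_mem_tail hx)⟩
      · rw [List.length_tail, hc]; omega
      · rw [getLast?_tail_of_two_le h2]; exact hlast


lemma stk_ne_nil (hb1 : ∀ t ≤ 2 * k, t ≤ 2 * cntU b t) {t : ℕ} (ht : t ≤ 2 * k) :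
    stk b t ≠ [] := by
  obtain ⟨hlen, -, -, -⟩ := stk_inv hb1 t ht
  intro h
  rw [h] at hlen
  have := hb1 t ht
  simp at hlen
  omega

lemma cntU_le_k (hb2 : cntU b (2 * k) = k) {t : ℕ} (ht : t ≤ 2 * k) : cntU b t ≤ k :=
  hb2 ▸ cntU_mono b ht

lemma stk_nodup (hb1 : ∀ t ≤ 2 * k, t ≤ 2 * cntU b t) {t : ℕ} (ht : t ≤ 2 * k) :
    (stk b t).Nodup := by
  obtain ⟨-, -, hch, -⟩ := stk_inv hb1 t ht
  have := List.isChain_iff_pairwise.1 hch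
  exact this.imp (fun h => Nat.ne_of_gt h)

lemma stk_final (hb1 : ∀ t ≤ 2 * k, t ≤ 2 * cntU b t) (hb2 : cntU b (2 * k) = k) :
    stk b (2 * k) = [0] := by
  obtain ⟨hlen, hlast, -, -⟩ := stk_inv hb1 (2 * k) le_rfl
  rw [hb2] at hlen
  exact eq_singleton_of_length_one_getLast? (by omega) hlast

lemma headD_mem {α : Type*} {l : List α} (h : l ≠ []) (d : α) : l.headD d ∈ l := by
  cases l with
  | nil => exact absurd rfl h
  | cons a m => simp

lemma stk_head_le (hb1 : ∀ t ≤ 2 * k, t ≤ 2 * cntU b t) {t : ℕ} (ht : t ≤ 2 * k) :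
    (stk b t).headD 0 ≤ cntU b t := by
  obtain ⟨-, -, -, hle⟩ := stk_inv hb1 t ht
  exact hle _ (headD_mem (stk_ne_nil hb1 ht) 0)

lemma stk_entries_were_heads {t : ℕ} :
    ∀ x ∈ stk b t, ∃ s ≤ t, (stk b s).headD 0 = x := by
  induction t with
  | zero => intro x hx; simp at hx; exact ⟨0, le_rfl, by simp [hx]⟩
  | succ t ih =>
    intro x hx
    by_cases hbt : b t
    · rw [stk_succ_true hbt] at hx
      rcases List.mem_cons.1 hx with h | h
      · exact ⟨t + 1, le_rfl, by rw [stk_succ_true hbt, h]; rfl⟩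
      · obtain ⟨s, hs, hhs⟩ := ih x h
        exact ⟨s, by omega, hhs⟩
    · rw [stk_succ_false hbt] at hx
      obtain ⟨s, hs, hhs⟩ := ih x (List.mem_of_mem_tail hx)
      exact ⟨s, by omega, hhs⟩

lemma stk_cover (hb1 : ∀ t ≤ 2 * k, t ≤ 2 * cntU b t) (hb2 : cntU b (2 * k) = k)
    {m : ℕ} (hm : m ≤ k) : ∃ t ≤ 2 * k, (stk b t).headD 0 = m := by
  rcases Nat.eq_zero_or_pos m with rfl | hm0
  · exact ⟨0, by omega, by simp⟩
  · have hex : ∃ t, m ≤ cntU b t := ⟨2 * k, by omega⟩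
    have hspec : m ≤ cntU b (Nat.find hex) := Nat.find_spec hex
    have ht0le : Nat.find hex ≤ 2 * k := Nat.find_le (by omega)
    have ht00 : Nat.find hex ≠ 0 := by
      intro h
      rw [h] at hspec
      simp at hspec
      omega
    obtain ⟨s, hs⟩ := Nat.exists_eq_succ_of_ne_zero ht00
    rw [hs] at hspec ht0le
    have hmin : ¬ m ≤ cntU b s := Nat.find_min hex (by omega)
    have hbs : b s = true := by
      by_contra hb
      rw [cntU_succ, if_neg hb] at hspec
      omega
    have hcnt : cntU b s + 1 = m := by
      rw [cntU_succ, if_pos hbs] at hspec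
      omega
    exact ⟨s + 1, ht0le, by rw [stk_succ_true hbs, hcnt]; rfl⟩

end WordInv

/-! ### Walks -/

section Walk

variable {V : Type*} [DecidableEq V]

/-- the edge traversed at step `t` -/
def eW (w : ℕ → V) (t : ℕ) : Sym2 V := s(w t, w (t + 1))

/-- prefix multiplicity of edge `e` -/
def cntE (w : ℕ → V) (t : ℕ) (e : Sym2 V) : ℕ :=
  ((Finset.range t).filter (fun s => eW w s = e)).card

@[simp] lemma cntE_zero (w : ℕ → V) (e : Sym2 V) : cntE w 0 e = 0 := by simp [cntE]

lemma cntE_succ (w : ℕ → V) (t : ℕ) (e : Sym2 V) :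
    cntE w (t + 1) e = cntE w t e + (if eW w t = e then 1 else 0) := by
  unfold cntE
  rw [Finset.range_add_one, Finset.filter_insert]
  split
  · rw [Finset.card_insert_of_notMem (by simp)]
  · simp

lemma cntE_mono (w : ℕ → V) (e : Sym2 V) : Monotone (fun t => cntE w t e) := by
  intro s t h
  unfold cntE
  exact Finset.card_le_card (Finset.filter_subset_filter _ (Finset.range_subset_range.2 h))

/-- vertices visited up to time `t` -/
def Vis (w : ℕ → V) (t : ℕ) : Finset V := (Finset.range (t + 1)).image w

@[simp] lemma Vis_zero (w : ℕ → V) : Vis w 0 = {w 0} := by simp [Vis]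

lemma Vis_succ (w : ℕ → V) (t : ℕ) : Vis w (t + 1) = insert (w (t + 1)) (Vis w t) := by
  unfold Vis
  rw [Finset.range_add_one, Finset.image_insert]

lemma mem_Vis {w : ℕ → V} {t : ℕ} {x : V} : x ∈ Vis w t ↔ ∃ s ≤ t, w s = x := by
  simp [Vis, Nat.lt_succ_iff]

lemma self_mem_Vis (w : ℕ → V) {s t : ℕ} (h : s ≤ t) : w s ∈ Vis w t :=
  mem_Vis.2 ⟨s, h, rfl⟩

lemma Vis_mono (w : ℕ → V) : Monotone (Vis w) := by
  intro s t h
  exact Finset.image_subset_image (Finset.range_subset_range.2 (by omega))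

lemma card_Vis_succ_le (w : ℕ → V) (t : ℕ) : (Vis w (t + 1)).card ≤ (Vis w t).card + 1 := by
  rw [Vis_succ]; exact Finset.card_insert_le _ _

/-- set of edges traversed before time `t` -/
def ES (w : ℕ → V) (t : ℕ) : Finset (Sym2 V) := (Finset.range t).image (eW w)

@[simp] lemma ES_zero (w : ℕ → V) : ES w 0 = ∅ := by simp [ES]

lemma ES_succ (w : ℕ → V) (t : ℕ) : ES w (t + 1) = insert (eW w t) (ES w t) := by
  unfold ES
  rw [Finset.range_add_one, Finset.image_insert]

lemma mem_ES {w : ℕ → V} {t : ℕ} {e : Sym2 V} : e ∈ ES w t ↔ ∃ s < t, eW w s = e := by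
  simp [ES]

lemma ES_endpoints {w : ℕ → V} {t : ℕ} {e : Sym2 V} (he : e ∈ ES w t) :
    ∀ x ∈ e, x ∈ Vis w t := by
  obtain ⟨s, hs, rfl⟩ := mem_ES.1 he
  intro x hx
  rw [eW, Sym2.mem_iff] at hx
  rcases hx with h | h
  · exact h ▸ self_mem_Vis w (by omega)
  · exact h ▸ self_mem_Vis w (by omega)

lemma cntE_pos_of_mem_ES {w : ℕ → V} {t : ℕ} {e : Sym2 V} (he : e ∈ ES w t) :
    1 ≤ cntE w t e := by
  obtain ⟨s, hs, hse⟩ := mem_ES.1 he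
  rw [cntE]
  refine Finset.card_pos.2 ⟨s, ?_⟩
  simp [hs, hse]

lemma mem_ES_of_cntE_pos {w : ℕ → V} {t : ℕ} {e : Sym2 V} (he : 1 ≤ cntE w t e) :
    e ∈ ES w t := by
  rw [cntE] at he
  obtain ⟨s, hs⟩ := Finset.card_pos.1 he
  rw [Finset.mem_filter, Finset.mem_range] at hs
  exact mem_ES.2 ⟨s, hs.1, hs.2⟩

end Walk

/-! ### The encoded walk -/

lemma exists_cons_cons_of_two_le {α : Type*} {l : List α} (h : 2 ≤ l.length) :
    ∃ a b m, l = a :: b :: m := by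
  match l, h with
  | a :: b :: m, _ => exact ⟨a, b, m, rfl⟩

section Encode

variable {k n : ℕ}

/-- extend an embedding of `Fin (k+1)` to all of `ℕ` -/
def gext (k : ℕ) {n : ℕ} (f : Fin (k + 1) ↪ Fin n) (m : ℕ) : Fin n :=
  if h : m < k + 1 then f ⟨m, h⟩ else f ⟨0, Nat.succ_pos k⟩

lemma gext_injOn (f : Fin (k + 1) ↪ Fin n) {m m' : ℕ} (hm : m ≤ k) (hm' : m' ≤ k)
    (h : gext k f m = gext k f m') : m = m' := by
  rw [gext, gext, dif_pos (show m < k + 1 by omega), dif_pos (show m' < k + 1 by omega)] at h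
  have := f.injective h
  simpa [Fin.ext_iff] using this

lemma gext_eq (f : Fin (k + 1) ↪ Fin n) {m : ℕ} (hm : m < k + 1) :
    gext k f m = f ⟨m, hm⟩ := dif_pos hm

/-- the walk encoded by a word and an embedding -/
def encW (b : ℕ → Bool) (f : Fin (k + 1) ↪ Fin n) (t : ℕ) : Fin n :=
  gext k f ((stk b t).headD 0)

variable {b : ℕ → Bool} (f : Fin (k + 1) ↪ Fin n)
variable (hb1 : ∀ t ≤ 2 * k, t ≤ 2 * cntU b t) (hb2 : cntU b (2 * k) = k)

include hb1 hb2

lemma gext_fresh_of_not_mem {x : ℕ} {l : List ℕ} (hx : x ≤ k) (hl : ∀ y ∈ l, y ≤ k)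
    (hxl : x ∉ l) : gext k f x ∉ l.map (gext k f) := by
  intro h
  obtain ⟨y, hy, hxy⟩ := List.mem_map.1 h
  exact hxl (gext_injOn f (hl y hy) hx hxy ▸ hy)

lemma enc_parity : ∀ t ≤ 2 * k, ∀ e : Sym2 (Fin n),
    (Odd (cntE (encW b f) t e) ↔ e ∈ pE ((stk b t).map (gext k f))) := by
  intro t
  induction t with
  | zero => intro _ e; simp [Nat.odd_iff]
  | succ t ih =>
    intro ht e
    have ht' : t ≤ 2 * k := by omega
    have ihe := ih ht'
    have hne := stk_ne_nil hb1 ht'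
    obtain ⟨hlen, -, -, hle⟩ := stk_inv hb1 t ht'
    have hculek : cntU b t ≤ k := cntU_le_k hb2 ht'
    have hwt : encW b f t = gext k f ((stk b t).headD 0) := rfl
    by_cases hbt : b t
    · -- push
      have hcu1 : cntU b (t + 1) = cntU b t + 1 := by rw [cntU_succ, if_pos hbt]
      have hck : cntU b t + 1 ≤ k := by
        have := cntU_le_k hb2 ht; omega
      obtain ⟨a, m, hstk⟩ := List.exists_cons_of_ne_nil hne
      have hwt1 : encW b f (t + 1) = gext k f (cntU b t + 1) := by
        rw [encW, stk_succ_true hbt]; rfl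
      have hwta : encW b f t = gext k f a := by rw [hwt, hstk]; rfl
      have heWt : eW (encW b f) t = s(gext k f (cntU b t + 1), gext k f a) := by
        rw [eW, hwt1, hwta, Sym2.eq_swap]
      have hfresh : gext k f (cntU b t + 1) ∉ (stk b t).map (gext k f) := by
        apply gext_fresh_of_not_mem f hb1 hb2 hck (fun y hy => le_trans (hle y hy) hculek)
        intro hmem
        have := hle _ hmem
        omega
      have henot : eW (encW b f) t ∉ pE ((stk b t).map (gext k f)) := by
        intro h
        exact hfresh (pE_endpoints h _ (by rw [heWt]; exact Sym2.mem_mk_left _ _))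
      have hpE1 : pE ((stk b (t + 1)).map (gext k f)) =
          insert (eW (encW b f) t) (pE ((stk b t).map (gext k f))) := by
        rw [stk_succ_true hbt, hstk, List.map_cons, List.map_cons, pE_cons_cons, heWt,
          ← List.map_cons, ← hstk]
      by_cases he : eW (encW b f) t = e
      · subst he
        rw [cntE_succ, if_pos rfl, hpE1]
        constructor
        · intro _; exact Finset.mem_insert_self _ _
        · intro _
          have : ¬ Odd (cntE (encW b f) t (eW (encW b f) t)) := fun h => henot ((ihe _).1 h)
          rw [Nat.not_odd_iff_even] at this
          exact this.add_one
      · rw [cntE_succ, if_neg he, hpE1, Finset.mem_insert]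
        rw [Nat.add_zero]
        rw [ihe e]
        constructor
        · intro h; exact Or.inr h
        · rintro (h | h)
          · exact absurd h.symm he
          · exact h
    · -- pop
      have hcu1 : cntU b (t + 1) = cntU b t := by rw [cntU_succ, if_neg hbt, Nat.add_zero]
      have h2 : 2 ≤ (stk b t).length := by
        have := hb1 (t + 1) ht
        omega
      obtain ⟨x, y, m, hstk⟩ := exists_cons_cons_of_two_le h2
      have hnd := stk_nodup hb1 ht'
      rw [hstk] at hnd
      have hxny : x ∉ y :: m := by
        rw [List.nodup_cons] at hnd
        exact hnd.1
      have hstk1 : stk b (t + 1) = y :: m := by rw [stk_succ_false hbt, hstk]; rfl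
      have hwtx : encW b f t = gext k f x := by rw [hwt, hstk]; rfl
      have hwt1 : encW b f (t + 1) = gext k f y := by rw [encW, hstk1]; rfl
      have heWt : eW (encW b f) t = s(gext k f x, gext k f y) := by
        rw [eW, hwtx, hwt1]
      have hxk : x ≤ k := le_trans (hle x (by rw [hstk]; simp)) hculek
      have hyk : ∀ z ∈ y :: m, z ≤ k := fun z hz =>
        le_trans (hle z (by rw [hstk]; exact List.mem_cons_of_mem _ hz)) hculek
      have hfresh : gext k f x ∉ (y :: m).map (gext k f) :=
        gext_fresh_of_not_mem f hb1 hb2 hxk hyk hxny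
      have hmem0 : eW (encW b f) t ∈ pE ((stk b t).map (gext k f)) := by
        rw [hstk, List.map_cons, List.map_cons, pE_cons_cons, heWt]
        exact Finset.mem_insert_self _ _
      have hnot1 : eW (encW b f) t ∉ pE (((y : ℕ) :: m).map (gext k f)) := by
        intro h
        exact hfresh (pE_endpoints h _ (by rw [heWt]; exact Sym2.mem_mk_left _ _))
      have hpEt : pE ((stk b t).map (gext k f)) =
          insert (eW (encW b f) t) (pE (((y : ℕ) :: m).map (gext k f))) := by
        rw [hstk, List.map_cons, List.map_cons, pE_cons_cons, heWt]
      by_cases he : eW (encW b f) t = e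
      · subst he
        rw [cntE_succ, if_pos rfl, hstk1]
        have hodd : Odd (cntE (encW b f) t (eW (encW b f) t)) := (ihe _).2 hmem0
        constructor
        · intro h
          exfalso
          rcases hodd with ⟨j, hj⟩
          rcases h with ⟨j', hj'⟩
          omega
        · intro h; exact absurd h hnot1
      · rw [cntE_succ, if_neg he, Nat.add_zero, hstk1, ihe e, hpEt, Finset.mem_insert]
        constructor
        · rintro (h | h)
          · exact absurd h.symm he
          · exact h
        · intro h; exact Or.inr h


lemma enc_closed : encW b f (2 * k) = encW b f 0 := by
  rw [encW, encW, stk_final hb1 hb2, stk_zero]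

lemma enc_even (e : Sym2 (Fin n)) : Even (cntE (encW b f) (2 * k) e) := by
  have h := enc_parity f hb1 hb2 (2 * k) le_rfl e
  rw [stk_final hb1 hb2] at h
  simp only [List.map_cons, List.map_nil, pE_single] at h
  rw [← Nat.not_odd_iff_even]
  intro ho
  simpa using h.1 ho

lemma enc_image (hk : 0 < k) :
    (Finset.range (2 * k)).image (encW b f) = Finset.univ.image f := by
  ext z
  simp only [Finset.mem_image, Finset.mem_range, Finset.mem_univ, true_and]
  constructor
  · rintro ⟨t, ht, rfl⟩
    have ht' : t ≤ 2 * k := by omega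
    have hle := stk_head_le hb1 ht'
    have hk' := cntU_le_k hb2 ht'
    refine ⟨⟨(stk b t).headD 0, by omega⟩, ?_⟩
    rw [encW, gext_eq f (by omega)]
  · rintro ⟨j, rfl⟩
    obtain ⟨t, ht, hhead⟩ := stk_cover hb1 hb2 (Nat.lt_succ_iff.1 j.isLt)
    rcases Nat.lt_or_ge t (2 * k) with h | h
    · refine ⟨t, h, ?_⟩
      rw [encW, hhead, gext_eq f j.isLt]
    · have ht2 : t = 2 * k := by omega
      rw [ht2, stk_final hb1 hb2] at hhead
      simp at hhead
      refine ⟨0, by omega, ?_⟩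
      rw [encW, stk_zero]
      simp only [List.headD_cons]
      rw [gext_eq f (Nat.succ_pos k)]
      exact congrArg f (Fin.ext (by simp [← hhead]))

lemma enc_card (hk : 0 < k) :
    ((Finset.range (2 * k)).image (encW b f)).card = k + 1 := by
  rw [enc_image f hb1 hb2 hk, Finset.card_image_of_injective _ f.injective]
  simp

lemma enc_new_iff {t : ℕ} (ht : t + 1 ≤ 2 * k) :
    (b t = true ↔ encW b f (t + 1) ∉ Vis (encW b f) t) := by
  have ht' : t ≤ 2 * k := by omega
  have hculek := cntU_le_k hb2 ht'
  constructor
  · intro hbt hmem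
    obtain ⟨s, hs, hws⟩ := mem_Vis.1 hmem
    have hs' : s ≤ 2 * k := by omega
    have h1 : encW b f (t + 1) = gext k f (cntU b t + 1) := by
      rw [encW, stk_succ_true hbt]; rfl
    have hsle : (stk b s).headD 0 ≤ cntU b t :=
      le_trans (stk_head_le hb1 hs') (cntU_mono b hs)
    have hck : cntU b t + 1 ≤ k := by
      have := cntU_le_k hb2 ht
      rw [cntU_succ, if_pos hbt] at this
      omega
    have : (stk b s).headD 0 = cntU b t + 1 :=
      gext_injOn f (by omega) hck (by rw [← h1, ← hws]; rfl)
    omega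
  · intro hnm
    by_contra hbt
    apply hnm
    have hbt' : ¬ b t = true := hbt
    have h1 : stk b (t + 1) = (stk b t).tail := stk_succ_false hbt'
    have hmem : (stk b (t + 1)).headD 0 ∈ stk b t := by
      have hne1 : stk b (t + 1) ≠ [] := stk_ne_nil hb1 ht
      exact List.mem_of_mem_tail (h1 ▸ headD_mem hne1 0)
    obtain ⟨s, hs, hhs⟩ := stk_entries_were_heads _ hmem
    refine mem_Vis.2 ⟨s, hs, ?_⟩
    rw [encW, encW, hhs]

end Encode









/-! ### Decoding a valid walk -/

section Decode

variable {k n : ℕ} {w : ℕ → Fin n}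

lemma Vis_top (hk : 0 < k) (hcl : w (2 * k) = w 0) :
    Vis w (2 * k) = (Finset.range (2 * k)).image w := by
  rw [Vis, Finset.range_add_one, Finset.image_insert, hcl, Finset.insert_eq_self]
  exact Finset.mem_image.2 ⟨0, Finset.mem_range.2 (by omega), rfl⟩

lemma sum_cntE : (ES w (2 * k)).sum (fun e => cntE w (2 * k) e) = 2 * k := by
  have := Finset.card_eq_sum_card_fiberwise
    (f := eW w) (s := Finset.range (2 * k)) (t := ES w (2 * k))
    (fun x hx => Finset.mem_image_of_mem _ hx)
  rw [Finset.card_range] at this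
  simp only [cntE]
  exact this.symm

section counts

variable (hk : 0 < k) (hcl : w (2 * k) = w 0)
  (hev : ∀ e, Even (cntE w (2 * k) e))
  (hcard : ((Finset.range (2 * k)).image w).card = k + 1)

include hev in
lemma two_le_cntE {e : Sym2 (Fin n)} (he : e ∈ ES w (2 * k)) : 2 ≤ cntE w (2 * k) e := by
  have h1 := cntE_pos_of_mem_ES he
  rcases hev e with ⟨j, hj⟩
  omega

include hev in
lemma card_ES_le : (ES w (2 * k)).card ≤ k := by
  have h := sum_cntE (k := k) (w := w)
  have h2 : (ES w (2 * k)).card * 2 ≤ (ES w (2 * k)).sum (fun e => cntE w (2 * k) e) := by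
    simpa [smul_eq_mul] using
      Finset.card_nsmul_le_sum (ES w (2 * k)) _ 2 (fun e he => two_le_cntE hev he)
  omega

lemma card_Vis_le_nondiag (t : ℕ) :
    (Vis w t).card ≤ ((ES w t).filter (fun e => ¬ e.IsDiag)).card + 1 := by
  induction t with
  | zero => simp
  | succ t ih =>
    by_cases hmem : w (t + 1) ∈ Vis w t
    · have h1 : Vis w (t + 1) = Vis w t := by rw [Vis_succ, Finset.insert_eq_self.2 hmem]
      rw [h1]
      refine le_trans ih ?_
      have hsub : (ES w t).filter (fun e => ¬ e.IsDiag) ⊆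
          (ES w (t + 1)).filter (fun e => ¬ e.IsDiag) :=
        Finset.filter_subset_filter _ (by rw [ES_succ]; exact Finset.subset_insert _ _)
      have := Finset.card_le_card hsub
      omega
    · have h1 : (Vis w (t + 1)).card = (Vis w t).card + 1 := by
        rw [Vis_succ, Finset.card_insert_of_notMem hmem]
      have hnotin : eW w t ∉ ES w t := by
        intro h
        exact hmem (ES_endpoints h _ (Sym2.mem_mk_right _ _))
      have hnd : ¬ (eW w t).IsDiag := by
        rw [eW, Sym2.mk_isDiag_iff]
        intro h
        exact hmem (h ▸ self_mem_Vis w le_rfl)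
      have h2 : insert (eW w t) ((ES w t).filter (fun e => ¬ e.IsDiag)) ⊆
          (ES w (t + 1)).filter (fun e => ¬ e.IsDiag) := by
        intro e he
        rcases Finset.mem_insert.1 he with rfl | he
        · exact Finset.mem_filter.2 ⟨by rw [ES_succ]; exact Finset.mem_insert_self _ _, hnd⟩
        · rw [Finset.mem_filter] at he
          exact Finset.mem_filter.2 ⟨by rw [ES_succ]; exact Finset.mem_insert_of_mem he.1, he.2⟩
      have h3 := Finset.card_le_card h2
      rw [Finset.card_insert_of_notMem (fun h => hnotin (Finset.mem_filter.1 h).1)] at h3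
      omega

include hk hcl hev hcard in
lemma card_ES_eq : (ES w (2 * k)).card = k := by
  have h1 := card_Vis_le_nondiag (w := w) (2 * k)
  rw [Vis_top hk hcl, hcard] at h1
  have h2 : ((ES w (2 * k)).filter (fun e => ¬ e.IsDiag)).card ≤ (ES w (2 * k)).card :=
    Finset.card_filter_le _ _
  have := card_ES_le hev (k := k)
  omega

include hk hcl hev hcard in
lemma cntE_top_eq_two {e : Sym2 (Fin n)} (he : e ∈ ES w (2 * k)) :
    cntE w (2 * k) e = 2 := by
  by_contra hne
  have h3 : 2 < cntE w (2 * k) e := lt_of_le_of_ne (two_le_cntE hev he) (Ne.symm hne)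
  have h4 : (ES w (2 * k)).sum (fun _ => 2) < (ES w (2 * k)).sum (fun e => cntE w (2 * k) e) :=
    Finset.sum_lt_sum (fun i hi => two_le_cntE hev hi) ⟨e, he, h3⟩
  rw [sum_cntE, Finset.sum_const, smul_eq_mul, card_ES_eq hk hcl hev hcard] at h4
  omega

include hk hcl hev hcard in
lemma no_loops {t : ℕ} (ht : t < 2 * k) : w t ≠ w (t + 1) := by
  have hmem : eW w t ∈ ES w (2 * k) := mem_ES.2 ⟨t, ht, rfl⟩
  have h1 := card_Vis_le_nondiag (w := w) (2 * k)
  rw [Vis_top hk hcl, hcard] at h1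
  have h2 : ((ES w (2 * k)).filter (fun e => ¬ e.IsDiag)).card ≤ (ES w (2 * k)).card :=
    Finset.card_filter_le _ _
  have h3 : (ES w (2 * k)).card ≤ k := card_ES_le hev
  have heq : (ES w (2 * k)).filter (fun e => ¬ e.IsDiag) = ES w (2 * k) := by
    apply Finset.eq_of_subset_of_card_le (Finset.filter_subset _ _)
    omega
  have : eW w t ∈ (ES w (2 * k)).filter (fun e => ¬ e.IsDiag) := by
    rw [heq]; exact hmem
  have hnd := (Finset.mem_filter.1 this).2
  rw [eW, Sym2.mk_isDiag_iff] at hnd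
  exact hnd

include hk hcl hev hcard in
/-- no step traverses a fresh edge towards an already-visited vertex -/
lemma no_fresh_to_old {t : ℕ} (ht : t < 2 * k) (hmem : w (t + 1) ∈ Vis w t) :
    eW w t ∈ ES w t := by
  classical
  by_contra hfresh
  have key : ∀ u, (Vis w u).card +
      ((Finset.range u).filter (fun s => w (s + 1) ∈ Vis w s ∧ eW w s ∉ ES w s)).card
      ≤ (ES w u).card + 1 := by
    intro u
    induction u with
    | zero => simp
    | succ u ih =>
      by_cases hm : w (u + 1) ∈ Vis w u
      · have h1 : Vis w (u + 1) = Vis w u := by rw [Vis_succ, Finset.insert_eq_self.2 hm]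
        by_cases hf : eW w u ∈ ES w u
        · have h2 : ES w (u + 1) = ES w u := by rw [ES_succ, Finset.insert_eq_self.2 hf]
          have h3 : ((Finset.range (u+1)).filter
              (fun s => w (s + 1) ∈ Vis w s ∧ eW w s ∉ ES w s)).card =
              ((Finset.range u).filter
              (fun s => w (s + 1) ∈ Vis w s ∧ eW w s ∉ ES w s)).card := by
            rw [Finset.range_add_one, Finset.filter_insert, if_neg (by tauto)]
          rw [h1, h2, h3]
          exact ih
        · have h2 : (ES w (u + 1)).card = (ES w u).card + 1 := by
            rw [ES_succ, Finset.card_insert_of_notMem hf]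
          have h3 : ((Finset.range (u+1)).filter
              (fun s => w (s + 1) ∈ Vis w s ∧ eW w s ∉ ES w s)).card =
              ((Finset.range u).filter
              (fun s => w (s + 1) ∈ Vis w s ∧ eW w s ∉ ES w s)).card + 1 := by
            rw [Finset.range_add_one, Finset.filter_insert, if_pos ⟨hm, hf⟩,
              Finset.card_insert_of_notMem (by simp)]
          rw [h1, h2, h3]
          omega
      · have h1 : (Vis w (u + 1)).card = (Vis w u).card + 1 := by
          rw [Vis_succ, Finset.card_insert_of_notMem hm]
        have hf : eW w u ∉ ES w u := by
          intro h
          exact hm (ES_endpoints h _ (Sym2.mem_mk_right _ _))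
        have h2 : (ES w (u + 1)).card = (ES w u).card + 1 := by
          rw [ES_succ, Finset.card_insert_of_notMem hf]
        have h3 : ((Finset.range (u+1)).filter
            (fun s => w (s + 1) ∈ Vis w s ∧ eW w s ∉ ES w s)).card =
            ((Finset.range u).filter
            (fun s => w (s + 1) ∈ Vis w s ∧ eW w s ∉ ES w s)).card := by
          rw [Finset.range_add_one, Finset.filter_insert, if_neg (by tauto)]
        rw [h1, h2, h3]
        omega
  have h4 := key (2 * k)
  rw [Vis_top hk hcl, hcard] at h4
  have h5 : (ES w (2 * k)).card ≤ k := card_ES_le hev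
  have h6 : 1 ≤ ((Finset.range (2 * k)).filter
      (fun s => w (s + 1) ∈ Vis w s ∧ eW w s ∉ ES w s)).card := by
    refine Finset.card_pos.2 ⟨t, ?_⟩
    rw [Finset.mem_filter, Finset.mem_range]
    exact ⟨ht, hmem, hfresh⟩
  omega

include hk hcl hev hcard in
lemma cntE_new {t : ℕ} (ht : t < 2 * k) (hmem : w (t + 1) ∉ Vis w t) :
    cntE w t (eW w t) = 0 := by
  by_contra h
  have h1 : eW w t ∈ ES w t := mem_ES_of_cntE_pos (by omega)
  exact hmem (ES_endpoints h1 _ (Sym2.mem_mk_right _ _))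

include hk hcl hev hcard in
lemma cntE_old {t : ℕ} (ht : t < 2 * k) (hmem : w (t + 1) ∈ Vis w t) :
    cntE w t (eW w t) = 1 := by
  have h1 : eW w t ∈ ES w t := no_fresh_to_old hk hcl hev hcard ht hmem
  have h2 := cntE_pos_of_mem_ES h1
  have h3 : eW w t ∈ ES w (2 * k) := mem_ES.2 ⟨t, ht, rfl⟩
  have h4 := cntE_top_eq_two hk hcl hev hcard h3
  have h5 : cntE w (t + 1) (eW w t) ≤ 2 := h4 ▸ cntE_mono w (eW w t) (by omega : t + 1 ≤ 2 * k)
  rw [cntE_succ, if_pos rfl] at h5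
  omega

end counts

/-- the vertex stack of a walk -/
def vstk (w : ℕ → Fin n) : ℕ → List (Fin n)
  | 0 => [w 0]
  | t + 1 => if w (t + 1) ∈ Vis w t then (vstk w t).tail else w (t + 1) :: vstk w t

/-- the Dyck word associated to a walk -/
def bw (w : ℕ → Fin n) (t : ℕ) : Bool := decide (w (t + 1) ∉ Vis w t)

section inv

variable (hk : 0 < k) (hcl : w (2 * k) = w 0)
  (hev : ∀ e, Even (cntE w (2 * k) e))
  (hcard : ((Finset.range (2 * k)).image w).card = k + 1)

include hk hcl hev hcard in
lemma walk_inv : ∀ t, t ≤ 2 * k →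
    (vstk w t).head? = some (w t) ∧
    (vstk w t).Nodup ∧
    (∀ x ∈ vstk w t, x ∈ Vis w t) ∧
    (∀ e, Odd (cntE w t e) ↔ e ∈ pE (vstk w t)) ∧
    (vstk w t).getLast? = some (w 0) ∧
    (vstk w t).length + t = 1 + 2 * cntU (bw w) t := by
  intro t
  induction t with
  | zero =>
    intro _
    refine ⟨rfl, by simp [vstk], by simp [vstk], ?_, rfl, by simp [vstk]⟩
    intro e
    simp [vstk, Nat.odd_iff]
  | succ t ih =>
    intro ht
    obtain ⟨hhd, hnd, hvis, hpar, hlast, hlen⟩ := ih (by omega)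
    have htlt : t < 2 * k := by omega
    obtain ⟨x0, rest, hvs⟩ : ∃ x0 rest, vstk w t = x0 :: rest := by
      cases hv : vstk w t with
      | nil => rw [hv] at hhd; simp at hhd
      | cons a l => exact ⟨a, l, rfl⟩
    have hx0 : x0 = w t := by rw [hvs] at hhd; simpa using hhd
    by_cases hmem : w (t + 1) ∈ Vis w t
    · -- pop step
      have hbw : bw w t = false := by simp [bw, hmem]
      have hcu : cntU (bw w) (t + 1) = cntU (bw w) t := by
        rw [cntU_succ, hbw]; simp
      have hone := cntE_old hk hcl hev hcard htlt hmem
      have hmempE : eW w t ∈ pE (vstk w t) := (hpar _).1 (by rw [hone]; exact odd_one)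
      have h2 : 2 ≤ (vstk w t).length := by
        by_contra hlt
        have hemp : pE (vstk w t) = ∅ := pE_eq_empty_iff.2 (by omega)
        rw [hemp] at hmempE
        simp at hmempE
      obtain ⟨x, y, m, hxy⟩ := exists_cons_cons_of_two_le h2
      have hx : x = w t := by rw [hxy] at hhd; simpa using hhd
      have hndxy : (x :: y :: m).Nodup := hxy ▸ hnd
      have heW : eW w t = s(x, y) := by
        apply pE_head hndxy (hxy ▸ hmempE)
        rw [eW, hx]
        exact Sym2.mem_mk_left _ _
      have hy : y = w (t + 1) := by
        rw [eW, hx] at heW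
        rcases Sym2.eq_iff.1 heW with ⟨-, h⟩ | ⟨h1, h2⟩
        · exact h.symm
        · exact absurd h2.symm (no_loops hk hcl hev hcard htlt)
      have hvs1 : vstk w (t + 1) = y :: m := by
        rw [vstk, if_pos hmem, hxy]; rfl
      have hnotpE : eW w t ∉ pE (y :: m) := by
        intro h
        have := pE_endpoints h x (by rw [heW]; exact Sym2.mem_mk_left _ _)
        rw [List.nodup_cons] at hndxy
        exact hndxy.1 this
      have hpEt : pE (vstk w t) = insert (eW w t) (pE (y :: m)) := by
        rw [hxy, pE_cons_cons, heW]
      refine ⟨?_, ?_, ?_, ?_, ?_, ?_⟩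
      · rw [hvs1, hy]; rfl
      · rw [hvs1]; exact (List.nodup_cons.1 hndxy).2
      · intro z hz
        rw [Vis_succ]
        exact Finset.mem_insert_of_mem (hvis z (by rw [hxy]; exact List.mem_cons_of_mem _ (hvs1 ▸ hz)))
      · intro e
        by_cases he : eW w t = e
        · subst he
          rw [cntE_succ, if_pos rfl, hone, hvs1]
          constructor
          · intro h; exact absurd h (by decide)
          · intro h; exact absurd h hnotpE
        · rw [cntE_succ, if_neg he, Nat.add_zero, hvs1, hpar e, hpEt, Finset.mem_insert]
          constructor
          · rintro (h | h)
            · exact absurd h.symm he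
            · exact h
          · intro h; exact Or.inr h
      · rw [hvs1]
        have hgl := getLast?_tail_of_two_le (l := x :: y :: m) (by simp)
        simp only [List.tail_cons] at hgl
        rw [hgl, ← hxy]
        exact hlast
      · rw [hvs1, hcu]
        have : (vstk w t).length = m.length + 2 := by rw [hxy]; simp
        simp only [List.length_cons]
        omega
    · -- push step
      have hbw : bw w t = true := by simp [bw, hmem]
      have hcu : cntU (bw w) (t + 1) = cntU (bw w) t + 1 := by
        rw [cntU_succ, hbw]; simp
      have hzero := cntE_new hk hcl hev hcard htlt hmem
      have hvs1 : vstk w (t + 1) = w (t + 1) :: vstk w t := by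
        rw [vstk, if_neg hmem]
      have hnotpE : eW w t ∉ pE (vstk w t) := by
        intro h
        exact hmem (hvis _ (pE_endpoints h _ (Sym2.mem_mk_right _ _)))
      have hpE1 : pE (vstk w (t + 1)) = insert s(w (t + 1), w t) (pE (vstk w t)) := by
        rw [hvs1, hvs, pE_cons_cons, ← hvs, hx0]
      have hswap : s(w (t + 1), w t) = eW w t := by rw [eW, Sym2.eq_swap]
      refine ⟨?_, ?_, ?_, ?_, ?_, ?_⟩
      · rw [hvs1]; rfl
      · rw [hvs1, List.nodup_cons]
        exact ⟨fun h => hmem (hvis _ h), hnd⟩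
      · intro z hz
        rw [hvs1] at hz
        rcases List.mem_cons.1 hz with rfl | hz
        · rw [Vis_succ]; exact Finset.mem_insert_self _ _
        · rw [Vis_succ]; exact Finset.mem_insert_of_mem (hvis z hz)
      · intro e
        by_cases he : eW w t = e
        · subst he
          rw [cntE_succ, if_pos rfl, hzero, hpE1, hswap]
          simp
        · rw [cntE_succ, if_neg he, Nat.add_zero, hpar e, hpE1, hswap, Finset.mem_insert]
          constructor
          · intro h; exact Or.inr h
          · rintro (h | h)
            · exact absurd h.symm he
            · exact h
      · rw [hvs1, getLast?_cons_of_ne_nil (by rw [hvs]; simp)]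
        exact hlast
      · rw [hvs1, List.length_cons, hcu]
        omega

include hk hcl hev hcard in
lemma bw_cond1 : ∀ t ≤ 2 * k, t ≤ 2 * cntU (bw w) t := by
  intro t ht
  obtain ⟨hhd, -, -, -, -, hlen⟩ := walk_inv hk hcl hev hcard t ht
  have : vstk w t ≠ [] := by intro h; rw [h] at hhd; simp at hhd
  have : 1 ≤ (vstk w t).length := List.length_pos_iff.2 this
  omega

include hk hcl hev hcard in
lemma bw_cond2 : cntU (bw w) (2 * k) = k := by
  obtain ⟨hhd, -, -, hpar, -, hlen⟩ := walk_inv hk hcl hev hcard (2 * k) le_rfl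
  have hemp : pE (vstk w (2 * k)) = ∅ := by
    apply Finset.eq_empty_iff_forall_notMem.2
    intro e he
    have hodd := (hpar e).2 he
    rcases hev e with ⟨j, hj⟩
    rcases hodd with ⟨j', hj'⟩
    omega
  have hle1 := pE_eq_empty_iff.1 hemp
  have : vstk w (2 * k) ≠ [] := by intro h; rw [h] at hhd; simp at hhd
  have : 1 ≤ (vstk w (2 * k)).length := List.length_pos_iff.2 this
  omega

include hk hcl hev hcard in
lemma decode_exists : ∃ f : Fin (k + 1) ↪ Fin n, ∀ t ≤ 2 * k, encW (bw w) f t = w t := by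
  classical
  have hb1 := bw_cond1 hk hcl hev hcard
  have hb2 := bw_cond2 hk hcl hev hcard
  have hVtop : (Vis w (2 * k)).card = k + 1 := by rw [Vis_top hk hcl]; exact hcard
  have H : ∀ m : Fin (k + 1), ∃ t, (m : ℕ) < (Vis w t).card := by
    intro m
    exact ⟨2 * k, by rw [hVtop]; exact m.isLt⟩
  set ft : Fin (k + 1) → ℕ := fun m => Nat.find (H m) with hft
  have hft_le : ∀ m, ft m ≤ 2 * k := fun m =>
    Nat.find_le (by rw [hVtop]; exact m.isLt)
  have hft_spec : ∀ m : Fin (k + 1), (m : ℕ) < (Vis w (ft m)).card :=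
    fun m => Nat.find_spec (H m)
  have hft_min : ∀ m s, s < ft m → (Vis w s).card ≤ (m : ℕ) := by
    intro m s hs
    have := Nat.find_min (H m) hs
    omega
  have hnew : ∀ m : Fin (k + 1), 0 < (m : ℕ) →
      ∃ s, ft m = s + 1 ∧ w (s + 1) ∉ Vis w s ∧ (Vis w s).card = (m : ℕ) := by
    intro m hm
    have h0 : ft m ≠ 0 := by
      intro h
      have := hft_spec m
      rw [h] at this
      simp only [Vis_zero, Finset.card_singleton] at this
      omega
    obtain ⟨s, hs⟩ := Nat.exists_eq_succ_of_ne_zero h0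
    rw [Nat.succ_eq_add_one] at hs
    have hmin := hft_min m s (by omega)
    have hspec := hft_spec m
    rw [hs] at hspec
    have hstep := card_Vis_succ_le w s
    refine ⟨s, hs, ?_, by omega⟩
    intro hmem
    have : Vis w (s + 1) = Vis w s := by rw [Vis_succ, Finset.insert_eq_self.2 hmem]
    rw [this] at hspec
    omega
  have hcard_ft : ∀ m : Fin (k + 1), (Vis w (ft m)).card = (m : ℕ) + 1 := by
    intro m
    rcases Nat.eq_zero_or_pos (m : ℕ) with hm | hm
    · have : ft m = 0 := by
        rw [hft]
        simp only [Nat.find_eq_zero]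
        rw [hm]
        simp
      rw [this, hm]
      simp
    · obtain ⟨s, hs, hnmem, hcs⟩ := hnew m hm
      rw [hs, Vis_succ, Finset.card_insert_of_notMem hnmem, hcs]
  have hkey2 : ∀ m m' : Fin (k + 1), (m : ℕ) < (m' : ℕ) → w (ft m) ≠ w (ft m') := by
    intro m m' hlt
    obtain ⟨s, hs, hnmem, hcs⟩ := hnew m' (by omega)
    have hle : ft m ≤ s := by
      by_contra hgt
      have := hft_min m s (by omega)
      omega
    intro hEq
    have hmm : w (ft m) ∈ Vis w s := self_mem_Vis w hle
    rw [hEq, hs] at hmm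
    exact hnmem hmm
  have hinj : Function.Injective (fun m => w (ft m)) := by
    intro m m' hEq
    by_contra hne
    rcases lt_trichotomy (m : ℕ) (m' : ℕ) with h | h | h
    · exact hkey2 m m' h hEq
    · exact hne (Fin.ext h)
    · exact hkey2 m' m h hEq.symm
  set f : Fin (k + 1) ↪ Fin n := ⟨fun m => w (ft m), hinj⟩ with hfdef
  have hid : ∀ t ≤ 2 * k,
      (stk (bw w) t).map (gext k f) = vstk w t ∧
      cntU (bw w) t + 1 = (Vis w t).card := by
    intro t
    induction t with
    | zero =>
      intro _
      constructor
      · have hft0 : ft ⟨0, Nat.succ_pos k⟩ = 0 := by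
          rw [hft]
          simp only [Nat.find_eq_zero]
          simp
        simp only [stk_zero, List.map_cons, List.map_nil]
        rw [gext_eq f (Nat.succ_pos k)]
        show [f ⟨0, _⟩] = vstk w 0
        rw [hfdef]
        simp only [Function.Embedding.coeFn_mk, hft0]
        rfl
      · simp
    | succ t ih =>
      intro ht
      obtain ⟨ih1, ih2⟩ := ih (by omega)
      by_cases hmem : w (t + 1) ∈ Vis w t
      · have hbw : bw w t = false := by simp [bw, hmem]
        have hvs1 : vstk w (t + 1) = (vstk w t).tail := by rw [vstk, if_pos hmem]
        have hcu : cntU (bw w) (t + 1) = cntU (bw w) t := by rw [cntU_succ, hbw]; simp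
        constructor
        · rw [stk_succ_false (by simp [hbw]), hvs1, ← ih1, List.map_tail]
        · rw [hcu, ih2, Vis_succ, Finset.insert_eq_self.2 hmem]
      · have hbw : bw w t = true := by simp [bw, hmem]
        have hvs1 : vstk w (t + 1) = w (t + 1) :: vstk w t := by rw [vstk, if_neg hmem]
        have hcu : cntU (bw w) (t + 1) = cntU (bw w) t + 1 := by
          rw [cntU_succ, hbw]; simp
        have hcVis : (Vis w (t + 1)).card = (Vis w t).card + 1 := by
          rw [Vis_succ, Finset.card_insert_of_notMem hmem]
        have hbound : cntU (bw w) t + 1 < k + 1 := by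
          have hmono := Finset.card_le_card (Vis_mono w (show t + 1 ≤ 2 * k by omega))
          rw [hVtop] at hmono
          omega
        have hftc : ft ⟨cntU (bw w) t + 1, hbound⟩ = t + 1 := by
          rw [hft]
          rw [Nat.find_eq_iff]
          constructor
          · show cntU (bw w) t + 1 < (Vis w (t + 1)).card
            omega
          · intro s hs hcon
            have hmono := Finset.card_le_card (Vis_mono w (show s ≤ t by omega))
            simp only at hcon
            omega
        constructor
        · rw [stk_succ_true hbw, hvs1, List.map_cons, ih1]
          congr 1
          rw [gext_eq f hbound, hfdef]
          simp only [Function.Embedding.coeFn_mk]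
          rw [hftc]
        · rw [hcu, hcVis]
          omega
  refine ⟨f, ?_⟩
  intro t ht
  have hne := stk_ne_nil hb1 ht
  obtain ⟨a, l, hstk⟩ := List.exists_cons_of_ne_nil hne
  obtain ⟨hhd, -, -, -, -, -⟩ := walk_inv hk hcl hev hcard t ht
  obtain ⟨hid1, -⟩ := hid t ht
  rw [hstk, List.map_cons] at hid1
  rw [← hid1] at hhd
  simp only [List.head?_cons] at hhd
  rw [encW, hstk]
  simpa using hhd

end inv

end Decode


/-! ### Dyck word glue -/

lemma count_U_add_count_D (l : List DyckStep) : l.count U + l.count D = l.length := by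
  induction l with
  | nil => rfl
  | cons a l ih =>
    cases a <;> simp [List.count_cons] <;> omega

lemma count_take_eq_cntU (l : List DyckStep) :
    ∀ t, t ≤ l.length → (l.take t).count U = cntU (fun s => decide (l.getD s D = U)) t := by
  intro t
  induction t with
  | zero => simp
  | succ t ih =>
    intro ht
    have ht' : t ≤ l.length := by omega
    have htl : t < l.length := by omega
    have hsome : l[t]? = some l[t] := List.getElem?_eq_getElem htl
    rw [List.take_succ, List.count_append, ih ht', cntU_succ]
    by_cases hU : l[t] = U
    · simp [hsome, hU]
    · have hD : l[t] = D := (DyckStep.dichotomy _).resolve_left hU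
      simp [hsome, hD]

/-- the Boolean word of a Dyck word -/
def bOf (p : DyckWord) : ℕ → Bool := fun t => decide (p.toList.getD t D = U)

variable {k : ℕ}

lemma bOf_length (p : DyckWord) (hsem : p.semilength = k) : p.toList.length = 2 * k := by
  rw [← p.two_mul_semilength_eq_length, hsem]

lemma bOf_cond1 (p : DyckWord) (hsem : p.semilength = k) :
    ∀ t ≤ 2 * k, t ≤ 2 * cntU (bOf p) t := by
  intro t ht
  have hlen := bOf_length p hsem
  have h1 := p.count_D_le_count_U t
  have h2 := count_U_add_count_D (p.toList.take t)
  rw [List.length_take, hlen, min_eq_left ht] at h2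
  have h3 := count_take_eq_cntU p.toList t (by omega)
  unfold bOf
  omega

lemma bOf_cond2 (p : DyckWord) (hsem : p.semilength = k) : cntU (bOf p) (2 * k) = k := by
  have hlen := bOf_length p hsem
  have h3 := count_take_eq_cntU p.toList (2 * k) (by omega)
  rw [List.take_of_length_le (by omega)] at h3
  unfold bOf
  rw [← h3]
  exact hsem

lemma exists_dyckword {b : ℕ → Bool} (hb1 : ∀ t ≤ 2 * k, t ≤ 2 * cntU b t)
    (hb2 : cntU b (2 * k) = k) :
    ∃ p : DyckWord, p.semilength = k ∧ ∀ t < 2 * k, bOf p t = b t := by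
  set l : List DyckStep := List.ofFn (fun t : Fin (2 * k) => if b t then U else D) with hl
  have hlen : l.length = 2 * k := by simp [hl]
  have hgd : ∀ t, t < 2 * k → l.getD t D = (if b t then U else D) := by
    intro t ht
    rw [List.getD_eq_getElem?_getD, List.getElem?_eq_getElem (by omega)]
    simp [hl]
  have hbeq : ∀ t < 2 * k, (fun s => decide (l.getD s D = U)) t = b t := by
    intro t ht
    show decide (l.getD t D = U) = b t
    rw [hgd t ht]
    cases hb : b t <;> simp
  have hcnt : ∀ t, t ≤ 2 * k → (l.take t).count U = cntU b t := by
    intro t ht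
    rw [count_take_eq_cntU l t (by omega)]
    exact cntU_congr (fun s hs => hbeq s (by omega))
  have hcntD : ∀ t, t ≤ 2 * k → (l.take t).count D = t - cntU b t := by
    intro t ht
    have h2 := count_U_add_count_D (l.take t)
    rw [List.length_take, hlen, min_eq_left ht] at h2
    have := hcnt t ht
    omega
  have hfull : l.take (2 * k) = l := List.take_of_length_le (by omega)
  refine ⟨⟨l, ?_, ?_⟩, ?_, ?_⟩
  · have h1 := hcnt (2 * k) le_rfl
    have h2 := hcntD (2 * k) le_rfl
    rw [hfull] at h1 h2
    omega
  · intro i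
    rcases le_or_gt i (2 * k) with hi | hi
    · have h1 := hcnt i hi
      have h2 := hcntD i hi
      have h3 := hb1 i hi
      omega
    · rw [List.take_of_length_le (by omega)]
      have h1 := hcnt (2 * k) le_rfl
      have h2 := hcntD (2 * k) le_rfl
      rw [hfull] at h1 h2
      omega
  · show l.count U = k
    have h1 := hcnt (2 * k) le_rfl
    rw [hfull] at h1
    omega
  · intro t ht
    show decide (l.getD t D = U) = b t
    exact hbeq t ht


/-! ### ZMod translation and the bijection -/

section Count

variable {k n : ℕ}

/-- validity of a cyclic walk -/
def OK (k n : ℕ) (i : ZMod (2 * k) → Fin n) : Prop :=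
  (∀ e : Sym2 (Fin n), Even (Nat.card {q : ZMod (2 * k) // s(i q, i (q + 1)) = e})) ∧
  Nat.card (Set.range i) = k + 1

lemma edge_translate (hk : 0 < k) (w : ℕ → Fin n) (hcl : w (2 * k) = w 0)
    (q : ZMod (2 * k)) :
    s(w q.val, w ((q + 1 : ZMod (2 * k)).val)) = eW w q.val := by
  haveI : NeZero (2 * k) := ⟨by omega⟩
  haveI : Fact (1 < 2 * k) := ⟨by omega⟩
  have hq : q.val < 2 * k := ZMod.val_lt q
  have hval : (q + 1 : ZMod (2 * k)).val = (q.val + 1) % (2 * k) := by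
    rw [ZMod.val_add, ZMod.val_one]
  rcases Nat.lt_or_ge (q.val + 1) (2 * k) with h | h
  · rw [hval, Nat.mod_eq_of_lt h]
    rfl
  · have h2 : q.val + 1 = 2 * k := by omega
    rw [hval, h2, Nat.mod_self, eW, h2, hcl]

lemma card_subtype_zmod (hk : 0 < k) (P : ℕ → Prop) [DecidablePred P] :
    Nat.card {q : ZMod (2 * k) // P q.val} = ((Finset.range (2 * k)).filter P).card := by
  haveI : NeZero (2 * k) := ⟨by omega⟩
  rw [Nat.card_eq_fintype_card, Fintype.card_subtype]
  apply Finset.card_bij (fun q _ => q.val)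
  · intro q hq
    rw [Finset.mem_filter] at hq ⊢
    exact ⟨Finset.mem_range.2 (ZMod.val_lt q), hq.2⟩
  · intro q _ q' _ h
    exact ZMod.val_injective _ h
  · intro t ht
    rw [Finset.mem_filter, Finset.mem_range] at ht
    refine ⟨(t : ZMod (2 * k)), ?_, ?_⟩
    · rw [Finset.mem_filter, ZMod.val_cast_of_lt ht.1]
      exact ⟨Finset.mem_univ _, ht.2⟩
    · rw [ZMod.val_cast_of_lt ht.1]

lemma range_translate (hk : 0 < k) (w : ℕ → Fin n) :
    Nat.card (Set.range (fun q : ZMod (2 * k) => w q.val)) =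
      ((Finset.range (2 * k)).image w).card := by
  haveI : NeZero (2 * k) := ⟨by omega⟩
  have hset : Set.range (fun q : ZMod (2 * k) => w q.val) =
      ↑((Finset.range (2 * k)).image w) := by
    ext x
    simp only [Set.mem_range, Finset.coe_image, Set.mem_image, Finset.mem_coe,
      Finset.mem_range]
    constructor
    · rintro ⟨q, rfl⟩
      exact ⟨q.val, ZMod.val_lt q, rfl⟩
    · rintro ⟨t, ht, rfl⟩
      exact ⟨(t : ZMod (2 * k)), by rw [ZMod.val_cast_of_lt ht]⟩
  rw [hset, Nat.card_coe_set_eq, Set.ncard_coe_finset]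

lemma OK_iff (hk : 0 < k) (w : ℕ → Fin n) (hcl : w (2 * k) = w 0) :
    OK k n (fun q => w q.val) ↔
      ((∀ e, Even (cntE w (2 * k) e)) ∧ ((Finset.range (2 * k)).image w).card = k + 1) := by
  unfold OK
  have h1 : ∀ e : Sym2 (Fin n),
      Nat.card {q : ZMod (2 * k) // s(w q.val, w ((q + 1 : ZMod (2 * k)).val)) = e} =
        cntE w (2 * k) e := by
    intro e
    have hcongr : ∀ q : ZMod (2 * k),
        (s(w q.val, w ((q + 1 : ZMod (2 * k)).val)) = e) ↔ (eW w q.val = e) := by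
      intro q
      rw [edge_translate hk w hcl q]
    rw [Nat.card_congr (Equiv.subtypeEquivRight hcongr),
      card_subtype_zmod hk (fun t => eW w t = e)]
    rfl
  constructor
  · rintro ⟨he, hc⟩
    refine ⟨fun e => ?_, ?_⟩
    · rw [← h1 e]; exact he e
    · rw [← range_translate hk w]; exact hc
  · rintro ⟨he, hc⟩
    refine ⟨fun e => ?_, ?_⟩
    · rw [h1 e]; exact he e
    · rw [range_translate hk w]; exact hc

/-- the encoding map -/
def enc (k n : ℕ) (x : {p : DyckWord // p.semilength = k} × (Fin (k + 1) ↪ Fin n)) :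
    ZMod (2 * k) → Fin n := fun q => encW (bOf x.1.1) x.2 q.val

lemma enc_OK (hk : 0 < k) (x : {p : DyckWord // p.semilength = k} × (Fin (k + 1) ↪ Fin n)) :
    OK k n (enc k n x) := by
  obtain ⟨⟨p, hsem⟩, f⟩ := x
  have hb1 := bOf_cond1 p hsem
  have hb2 := bOf_cond2 p hsem
  have hcl : encW (bOf p) f (2 * k) = encW (bOf p) f 0 := enc_closed f hb1 hb2
  rw [show enc k n (⟨⟨p, hsem⟩, f⟩) = fun q : ZMod (2 * k) => encW (bOf p) f q.val from rfl,
    OK_iff hk _ hcl]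
  exact ⟨fun e => enc_even f hb1 hb2 e, enc_card f hb1 hb2 hk⟩

lemma getElem_toList (p : DyckWord) (hsem : p.semilength = k) {t : ℕ} (ht : t < 2 * k) :
    p.toList[t]'(by rw [bOf_length p hsem]; exact ht) = if bOf p t then U else D := by
  have hlen := bOf_length p hsem
  have hsome : p.toList[t]? = some (p.toList[t]'(by omega)) :=
    List.getElem?_eq_getElem (by omega)
  have hgd : p.toList.getD t D = p.toList[t]'(by omega) := by
    rw [List.getD_eq_getElem?_getD, hsome]; rfl
  rcases DyckStep.dichotomy (p.toList[t]'(by omega)) with h | h <;>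
    · rw [h]
      unfold bOf
      rw [hgd, h]
      simp

lemma enc_bijective (hk : 0 < k) :
    Function.Bijective
      (fun x : {p : DyckWord // p.semilength = k} × (Fin (k + 1) ↪ Fin n) =>
        (⟨enc k n x, enc_OK hk x⟩ : {i : ZMod (2 * k) → Fin n // OK k n i})) := by
  haveI : NeZero (2 * k) := ⟨by omega⟩
  constructor
  · rintro ⟨⟨p, hsem⟩, f⟩ ⟨⟨p', hsem'⟩, f'⟩ hEq
    rw [Subtype.mk_eq_mk] at hEq
    have hfun : ∀ q : ZMod (2 * k), encW (bOf p) f q.val = encW (bOf p') f' q.val :=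
      fun q => congrFun hEq q
    have hb1 := bOf_cond1 p hsem
    have hb2 := bOf_cond2 p hsem
    have hb1' := bOf_cond1 p' hsem'
    have hb2' := bOf_cond2 p' hsem'
    have hwt : ∀ t ≤ 2 * k, encW (bOf p) f t = encW (bOf p') f' t := by
      intro t ht
      rcases Nat.lt_or_ge t (2 * k) with h | h
      · have := hfun (t : ZMod (2 * k))
        rwa [ZMod.val_cast_of_lt h] at this
      · have ht2 : t = 2 * k := by omega
        subst ht2
        rw [enc_closed f hb1 hb2, enc_closed f' hb1' hb2']
        have := hfun (0 : ZMod (2 * k))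
        rwa [ZMod.val_zero] at this
    have hword : ∀ t, t < 2 * k → bOf p t = bOf p' t := by
      intro t ht
      have hVis : Vis (encW (bOf p) f) t = Vis (encW (bOf p') f') t := by
        unfold Vis
        apply Finset.image_congr
        intro s hs
        rw [Finset.coe_range, Set.mem_Iio] at hs
        exact hwt s (by omega)
      have hw1 : encW (bOf p) f (t + 1) = encW (bOf p') f' (t + 1) := hwt _ (by omega)
      have hiff := enc_new_iff f hb1 hb2 (show t + 1 ≤ 2 * k by omega)
      have hiff' := enc_new_iff f' hb1' hb2' (show t + 1 ≤ 2 * k by omega)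
      rw [Bool.eq_iff_iff, hiff, hiff', hVis, hw1]
    have hpl : p = p' := by
      apply DyckWord.ext
      apply List.ext_getElem
      · rw [bOf_length p hsem, bOf_length p' hsem']
      · intro t h1 h2
        have ht : t < 2 * k := by rw [bOf_length p hsem] at h1; exact h1
        rw [getElem_toList p hsem ht, getElem_toList p' hsem' ht, hword t ht]
    subst hpl
    have hff : f = f' := by
      apply Function.Embedding.ext
      intro j
      obtain ⟨t, ht, hhd⟩ := stk_cover hb1 hb2 (Nat.lt_succ_iff.1 j.isLt)
      have h1 := hwt t ht
      rw [encW, encW, hhd, gext_eq f j.isLt, gext_eq f' j.isLt] at h1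
      simpa using h1
    subst hff
    rfl
  · rintro ⟨i, hOK⟩
    set w : ℕ → Fin n := fun t => i (t : ZMod (2 * k)) with hw
    have hiq : ∀ q : ZMod (2 * k), i q = w q.val := by
      intro q
      rw [hw]
      exact (congrArg i (ZMod.natCast_rightInverse q)).symm
    have hieq : i = fun q => w q.val := funext hiq
    have hcl : w (2 * k) = w 0 := by
      rw [hw]
      simp [ZMod.natCast_self]
    rw [hieq, OK_iff hk w hcl] at hOK
    obtain ⟨hev, hcard⟩ := hOK
    obtain ⟨f, hf⟩ := decode_exists hk hcl hev hcard
    obtain ⟨p, hsem, hpb⟩ := exists_dyckword (bw_cond1 hk hcl hev hcard)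
      (bw_cond2 hk hcl hev hcard)
    refine ⟨⟨⟨p, hsem⟩, f⟩, ?_⟩
    apply Subtype.ext
    funext q
    show encW (bOf p) f q.val = i q
    have hq := ZMod.val_lt q
    have hcg : encW (bOf p) f q.val = encW (bw w) f q.val := by
      unfold encW
      rw [stk_congr (fun s hs => hpb s (by omega))]
    rw [hcg, hf q.val (le_of_lt hq), hiq q]

lemma card_OK (hk : 0 < k) :
    Nat.card {i : ZMod (2 * k) → Fin n // OK k n i} =
      catalan k * n.descFactorial (k + 1) := by
  rw [← Nat.card_eq_of_bijective _ (enc_bijective hk), Nat.card_prod]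
  congr 1
  · rw [Nat.card_eq_fintype_card, DyckWord.card_dyckWord_semilength_eq_catalan]
  · rw [Nat.card_eq_fintype_card, Fintype.card_embedding_eq, Fintype.card_fin,
      Fintype.card_fin]

end Count


/-! ### Arithmetic -/

lemma catalan_factorial (k : ℕ) :
    catalan k * (k.factorial * (k + 1).factorial) = (2 * k).factorial := by
  have h1 := _root_.succ_mul_catalan_eq_centralBinom k
  have h2 := Nat.choose_mul_factorial_mul_factorial (show k ≤ 2 * k by omega)
  have h3 : Nat.centralBinom k = (2 * k).choose k := rfl
  have h4 : 2 * k - k = k := by omega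
  rw [h4] at h2
  calc catalan k * (k.factorial * (k + 1).factorial)
      = ((k + 1) * catalan k) * (k.factorial * k.factorial) := by
        rw [Nat.factorial_succ]; ring
    _ = (2 * k).choose k * k.factorial * k.factorial := by rw [h1, h3]; ring
    _ = (2 * k).factorial := h2

lemma pow_le_descFactorial_add (n : ℕ) :
    ∀ s : ℕ, n ^ (s + 1) ≤ n.descFactorial (s + 1) + (s + 1) * (s + 1) * n ^ s := by
  intro s
  induction s with
  | zero => simp [Nat.descFactorial_succ]
  | succ s ih =>
    have hd : n.descFactorial (s + 2) = (n - (s + 1)) * n.descFactorial (s + 1) :=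
      Nat.descFactorial_succ n (s + 1)
    have hdp : n.descFactorial (s + 1) ≤ n ^ (s + 1) := Nat.descFactorial_le_pow n (s + 1)
    rcases Nat.lt_or_ge n (s + 1) with hn | hn
    · calc n ^ (s + 2) = n * n ^ (s + 1) := by ring
        _ ≤ (s + 1) * n ^ (s + 1) := Nat.mul_le_mul_right _ (by omega)
        _ ≤ (s + 2) * (s + 2) * n ^ (s + 1) := Nat.mul_le_mul_right _ (by nlinarith)
        _ ≤ n.descFactorial (s + 2) + (s + 2) * (s + 2) * n ^ (s + 1) := by omega
    · have e1 : n - (s + 1) + (s + 1) = n := Nat.sub_add_cancel hn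
      have hsplit : n * n.descFactorial (s + 1) =
          (n - (s + 1)) * n.descFactorial (s + 1) + (s + 1) * n.descFactorial (s + 1) := by
        set d := n.descFactorial (s + 1) with hdd
        conv_lhs => rw [← e1]
        rw [Nat.add_mul]
      calc n ^ (s + 2) = n * n ^ (s + 1) := by ring
        _ ≤ n * (n.descFactorial (s + 1) + (s + 1) * (s + 1) * n ^ s) :=
            Nat.mul_le_mul_left n ih
        _ = n * n.descFactorial (s + 1) + (s + 1) * (s + 1) * (n * n ^ s) := by ring
        _ = (n - (s + 1)) * n.descFactorial (s + 1) + (s + 1) * n.descFactorial (s + 1)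
              + (s + 1) * (s + 1) * n ^ (s + 1) := by rw [hsplit]; ring
        _ ≤ n.descFactorial (s + 2) + (s + 1) * n ^ (s + 1)
              + (s + 1) * (s + 1) * n ^ (s + 1) := by
            rw [hd]
            have := Nat.mul_le_mul_left (s + 1) hdp
            omega
        _ ≤ n.descFactorial (s + 2) + (s + 2) * (s + 2) * n ^ (s + 1) := by nlinarith

end EWC

/-- For fixed even `r > 0`, the number of closed walks of length `r` on the complete
graph on `n` labeled vertices (loops allowed) in which every traversed undirected
edge is traversed an even number of times and which visit exactly `r/2 + 1` distinct
vertices is `C_{r/2}·n^{r/2+1} + O(n^{r/2})` as `n → ∞`, with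
`C_k = (2k)!/(k!(k+1)!)` the Catalan numbers. -/
theorem even_walk_count_asymptotics (r : ℕ) (hr : Even r) (hr0 : 0 < r) :
    ∃ C : ℝ, ∀ n : ℕ,
      |(Nat.card {i : ZMod r → Fin n //
            (∀ e : Sym2 (Fin n),
              Even (Nat.card {q : ZMod r // s(i q, i (q + 1)) = e})) ∧
            Nat.card (Set.range i) = r / 2 + 1} : ℝ) -
          ((Nat.factorial (2 * (r / 2)) : ℝ) /
              ((Nat.factorial (r / 2) : ℝ) * (Nat.factorial (r / 2 + 1) : ℝ))) *
            (n : ℝ) ^ (r / 2 + 1)| ≤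
        C * (n : ℝ) ^ (r / 2) := by
  obtain ⟨k, rfl⟩ := hr
  have hk0 : 0 < k := by omega
  have hdiv : (k + k) / 2 = k := by omega
  have h2k : k + k = 2 * k := by omega
  simp only [hdiv]
  rw [h2k]
  refine ⟨(catalan k : ℝ) * (((k : ℝ) + 1) * ((k : ℝ) + 1)), fun n => ?_⟩
  have hcount : (Nat.card {i : ZMod (2 * k) → Fin n //
      (∀ e : Sym2 (Fin n), Even (Nat.card {q : ZMod (2 * k) // s(i q, i (q + 1)) = e})) ∧
      Nat.card (Set.range i) = k + 1}) = catalan k * n.descFactorial (k + 1) :=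
    EWC.card_OK hk0
  rw [hcount]
  have hc : ((2 * k).factorial : ℝ) / ((k.factorial : ℝ) * ((k + 1).factorial : ℝ)) =
      (catalan k : ℝ) := by
    rw [div_eq_iff (by positivity)]
    exact_mod_cast (EWC.catalan_factorial k).symm
  rw [hc]
  have h1 : (n.descFactorial (k + 1) : ℝ) ≤ (n : ℝ) ^ (k + 1) := by
    exact_mod_cast Nat.descFactorial_le_pow n (k + 1)
  have h2 : ((n : ℝ)) ^ (k + 1) ≤ (n.descFactorial (k + 1) : ℝ) +
      ((k : ℝ) + 1) * ((k : ℝ) + 1) * (n : ℝ) ^ k := by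
    exact_mod_cast EWC.pow_le_descFactorial_add n k
  have hcat : (0 : ℝ) ≤ (catalan k : ℝ) := Nat.cast_nonneg _
  have hnk : (0 : ℝ) ≤ (n : ℝ) ^ k := by positivity
  rw [abs_le]
  push_cast
  constructor
  · nlinarith [mul_le_mul_of_nonneg_left h2 hcat]
  · nlinarith [mul_le_mul_of_nonneg_left h1 hcat]
end
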